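/- arXiv:2207.04404 — 13 statements merged into one kernel-verified Lean document; each statement's English description precedes it below -/
import Mathlib

section
/- If q and q-1 are both prime powers, then either q is a Fermat prime (a prime of the form 2^(2^k)+1), or q-1 is a Mersenne prime (a prime of the form 2^m-1), or q = 9. -/
lemma sum_pow_mod_two (x : ℤ) (hx : Odd x) (m : ℕ) :
    (∑ i ∈ Finset.range m, x ^ i) % 2 = m % 2 := by
  induction m with
  | zero => simp
  | succ k ih =>
    rw [Finset.sum_range_succ]
    have hxk : x ^ k % 2 = 1 := Int.odd_iff.mp (hx.pow)
    omega

/-- Odd geometric sum: for odd `x` and odd `n`, there is an odd `T` with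
`T * (x - 1) = x ^ n - 1`. -/
lemma odd_geom_sum (x : ℤ) (n : ℕ) (hx : Odd x) (hn : Odd n) :
    ∃ T : ℤ, Odd T ∧ T * (x - 1) = x ^ n - 1 := by
  refine ⟨∑ i ∈ Finset.range n, x ^ i, ?_, geom_sum_mul x n⟩
  rw [Int.odd_iff, sum_pow_mod_two x hx n]
  have := Nat.odd_iff.mp hn
  omega

/-- An odd positive divisor of a power of two equals one. -/
lemma odd_dvd_two_pow (T : ℤ) (a : ℕ) (hT : Odd T) (hpos : 0 < T) (hdvd : T ∣ 2 ^ a) : T = 1 := by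
  have h1 : T.natAbs ∣ 2 ^ a := by
    simpa [Int.natAbs_pow] using Int.natAbs_dvd_natAbs.mpr hdvd
  have h2 : Odd T.natAbs := Int.natAbs_odd.mpr hT
  have hcop : Nat.Coprime 2 T.natAbs :=
    (Nat.prime_two.coprime_iff_not_dvd).mpr (by
      have := Nat.odd_iff.mp h2
      omega)
  have := (hcop.symm.pow_right a).eq_one_of_dvd h1
  omega

/-- If `p` is odd, `n` odd, and `p ^ n + 1` is a power of two, then `n = 1`. -/
lemma case_mersenne (p n a : ℕ) (hp : 2 ≤ p) (hpo : Odd p) (hn : Odd n)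
    (h : p ^ n + 1 = 2 ^ a) : n = 1 := by
  obtain ⟨T, hT, hTe⟩ := odd_geom_sum (-(p : ℤ)) n (by obtain ⟨k, hk⟩ := hpo; exact ⟨-(k:ℤ)-1, by rw [hk]; push_cast; ring⟩) hn
  have hneg : (-(p:ℤ)) ^ n = -((p:ℤ) ^ n) := hn.neg_pow _
  rw [hneg] at hTe
  have key : T * ((p : ℤ) + 1) = (p : ℤ) ^ n + 1 := by linarith [hTe]
  have hInt : (p : ℤ) ^ n + 1 = 2 ^ a := by exact_mod_cast h
  have hdvd : T ∣ (2 : ℤ) ^ a := ⟨(p:ℤ) + 1, by rw [← hInt]; exact key.symm⟩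
  have hpos : 0 < T := by
    by_contra hc
    push_neg at hc
    have h1 : (0:ℤ) < (p:ℤ) ^ n + 1 := by positivity
    have h2 : (0:ℤ) < (p:ℤ) + 1 := by positivity
    nlinarith
  have hT1 : T = 1 := odd_dvd_two_pow T a hT hpos hdvd
  rw [hT1, one_mul] at key
  have : (p:ℤ) ^ n = (p:ℤ) ^ 1 := by rw [pow_one]; linarith
  exact Nat.pow_right_injective hp (by exact_mod_cast this)

/-- If `p` is odd, `n` odd, and `p ^ n - 1` is a power of two, then `n = 1`. -/
lemma case_fermat (p n a : ℕ) (hp : 2 ≤ p) (hpo : Odd p) (hn : Odd n)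
    (h : p ^ n - 1 = 2 ^ a) : n = 1 := by
  have hpn : 1 ≤ p ^ n := Nat.one_le_pow _ _ (by omega)
  obtain ⟨T, hT, hTe⟩ := odd_geom_sum (p : ℤ) n (by exact_mod_cast hpo) hn
  have hInt : (p : ℤ) ^ n - 1 = 2 ^ a := by zify [hpn] at h; exact_mod_cast h
  have hdvd : T ∣ (2 : ℤ) ^ a := ⟨(p:ℤ) - 1, by rw [← hInt, ← hTe]⟩
  have hpos : 0 < T := by
    by_contra hc
    push_neg at hc
    have h2 : (0:ℤ) < (p:ℤ) - 1 := by
      have : (2:ℤ) ≤ (p:ℤ) := by exact_mod_cast hp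
      linarith
    have h1 : (0:ℤ) < (p:ℤ) ^ n - 1 := by rw [hInt]; positivity
    nlinarith
  have hT1 : T = 1 := odd_dvd_two_pow T a hT hpos hdvd
  rw [hT1, one_mul] at hTe
  have : (p:ℤ) ^ n = (p:ℤ) ^ 1 := by rw [pow_one]; linarith
  exact Nat.pow_right_injective hp (by exact_mod_cast this)
/-- If `q` and `q-1` are both prime powers, then either `q` is a Fermat prime,
or `q-1` is a Mersenne prime, or `q = 9`. -/
theorem stmt_0 (q : ℕ) (hq2 : 2 ≤ q) (hq : IsPrimePow q) (hq1 : IsPrimePow (q - 1)) :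
    (Nat.Prime q ∧ ∃ k : ℕ, q = 2 ^ (2 ^ k) + 1) ∨
    (Nat.Prime (q - 1) ∧ ∃ m : ℕ, q - 1 = 2 ^ m - 1) ∨ q = 9 := by
  obtain ⟨p, a, hp, ha, hqe⟩ := hq
  obtain ⟨r, b, hr, hb, hq1e⟩ := hq1
  have hp' : Nat.Prime p := hp.nat_prime
  have hr' : Nat.Prime r := hr.nat_prime
  have hq1pos : 2 ≤ q - 1 := by
    have := Nat.one_lt_pow (n := b) (by omega) hr'.two_le
    omega
  have hq3 : 3 ≤ q := by omega
  rcases Nat.even_or_odd q with hqeven | hqodd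
  · -- q = 2 ^ a, and q - 1 = r ^ b is odd
    have hpeven : p = 2 := by
      have h1 : Even (p ^ a) := hqe ▸ hqeven
      rcases Nat.even_pow.mp h1 with ⟨hpe, -⟩
      exact (Nat.Prime.even_iff hp').mp hpe
    subst hpeven
    have hodd1 : Odd (q - 1) := Nat.Even.sub_odd (by omega) hqeven odd_one
    have hro : Odd r := by
      have h1 : Odd (r ^ b) := hq1e ▸ hodd1
      rcases Nat.even_or_odd r with h | h
      · exact absurd h1 (Nat.not_odd_iff_even.mpr (Nat.even_pow.mpr ⟨h, by omega⟩))
      · exact h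
    rcases Nat.even_or_odd b with hbe | hbo
    · -- q - 1 is an odd square: impossible
      exfalso
      obtain ⟨c, hc⟩ := hbe
      have hb2 : r ^ b = (r ^ c) ^ 2 := by rw [← pow_mul]; congr 1; omega
      have hso : Odd (r ^ c) := hro.pow
      obtain ⟨k, hk⟩ := hso
      have hsq : 2 ^ a = (2 * k + 1) ^ 2 + 1 := by
        rw [← hk, ← hb2, hq1e, hqe]; omega
      rcases Nat.lt_or_ge a 2 with h2 | h2
      · interval_cases a <;> omega
      · have h4 : (4 : ℕ) ∣ 2 ^ a := by
          calc (4:ℕ) = 2 ^ 2 := rfl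
          _ ∣ 2 ^ a := pow_dvd_pow 2 h2
        have : (2 * k + 1) ^ 2 + 1 = 4 * (k * k + k) + 2 := by ring
        omega
    · -- b odd: r ^ b + 1 = 2 ^ a, so b = 1
      have hsum : r ^ b + 1 = 2 ^ a := by rw [hq1e, hqe]; omega
      have hb1 : b = 1 := case_mersenne r b a hr'.two_le hro hbo hsum
      refine Or.inr (Or.inl ⟨?_, a, ?_⟩)
      · rw [← hq1e, hb1, pow_one]; exact hr'
      · rw [← hqe]
  · -- q = p ^ a odd, q - 1 = 2 ^ b
    have hpo : Odd p := by
      have h1 : Odd (p ^ a) := hqe ▸ hqodd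
      rcases Nat.even_or_odd p with h | h
      · exact absurd h1 (Nat.not_odd_iff_even.mpr (Nat.even_pow.mpr ⟨h, by omega⟩))
      · exact h
    have hreven : r = 2 := by
      have h1 : Even (q - 1) := by
        rw [Nat.even_iff]
        have := Nat.odd_iff.mp hqodd
        omega
      have h2 : Even (r ^ b) := hq1e ▸ h1
      rcases Nat.even_pow.mp h2 with ⟨hre, -⟩
      exact (Nat.Prime.even_iff hr').mp hre
    subst hreven
    rcases Nat.even_or_odd a with hae | hao
    · -- a even: q is an odd square, forces q = 9
      refine Or.inr (Or.inr ?_)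
      obtain ⟨c, hc⟩ := hae
      obtain ⟨s, hs⟩ : ∃ s : ℕ, p ^ c = s := ⟨p ^ c, rfl⟩
      have hso : Odd s := hs ▸ hpo.pow
      have hsq : s ^ 2 = q := by
        rw [← hs, ← pow_mul, ← hqe]; congr 1; omega
      have hs2 : 2 ≤ s := by
        rw [← hs]
        exact Nat.one_lt_pow (by omega) hp'.one_lt
      have hs3 : 3 ≤ s := by
        obtain ⟨k, hk⟩ := hso
        omega
      have hfac : (s - 1) * (s + 1) = 2 ^ b := by
        obtain ⟨t, rfl⟩ := Nat.exists_eq_add_of_le hs3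
        have h1 : (3 + t - 1) * (3 + t + 1) = (2 + t) * (4 + t) := by congr 1 <;> omega
        rw [h1, hq1e, ← hsq]
        have : (3 + t) ^ 2 = (2 + t) * (4 + t) + 1 := by ring
        omega
      have hd1 : (s - 1) ∣ 2 ^ b := ⟨s + 1, hfac.symm⟩
      have hd2 : (s + 1) ∣ 2 ^ b := ⟨s - 1, by rw [← hfac]; ring⟩
      obtain ⟨e, -, he⟩ := (Nat.dvd_prime_pow Nat.prime_two).mp hd1
      obtain ⟨d, -, hd⟩ := (Nat.dvd_prime_pow Nat.prime_two).mp hd2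
      have hde : 2 ^ d = 2 ^ e + 2 := by omega
      have he1 : 1 ≤ e := by
        obtain ⟨k, hk⟩ := hso
        rcases Nat.eq_zero_or_pos e with h0 | h1
        · rw [h0] at he; omega
        · exact h1
      have he2 : e = 1 := by
        by_contra hne
        have he2' : 2 ≤ e := by omega
        have h4e : (4:ℕ) ∣ 2 ^ e := by
          calc (4:ℕ) = 2 ^ 2 := rfl
          _ ∣ 2 ^ e := pow_dvd_pow 2 he2'
        have hd2' : 2 ≤ d := by
          have h6 : 6 ≤ 2 ^ d := by omega
          by_contra hc2
          interval_cases d <;> omega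
        have h4d : (4:ℕ) ∣ 2 ^ d := by
          calc (4:ℕ) = 2 ^ 2 := rfl
          _ ∣ 2 ^ d := pow_dvd_pow 2 hd2'
        omega
      have hs3' : s = 3 := by rw [he2] at he; omega
      rw [← hsq, hs3']
      norm_num
    · -- a odd: q = p is prime, and q = 2 ^ b + 1 a Fermat prime
      have hdiff : p ^ a - 1 = 2 ^ b := by rw [hqe, ← hq1e]
      have ha1 : a = 1 := case_fermat p a b hp'.two_le hpo hao hdiff
      rw [ha1, pow_one] at hqe
      subst hqe
      have hqb : p = 2 ^ b + 1 := by
        have h1 : 2 ^ b = p - 1 := hq1e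
        omega
      have hbne : b ≠ 0 := by
        intro h0
        rw [h0, pow_zero] at hqb
        omega
      obtain ⟨k, hk⟩ := Nat.pow_of_pow_add_prime (a := 2) one_lt_two hbne
        (by rw [← hqb]; exact hp')
      exact Or.inl ⟨hp', k, by rw [hqb, hk]⟩
end

section
/- Let q > 2 be such that both q and q-1 are prime powers, and let n > 1 be an integer. Then q^n - 1 has a prime factor coprime to q - 1, unless q = 3 and n = 2. -/
private lemma aux1' (t : ℕ) : ∀ n, 2 ≤ n → (t + 2) * n + 1 < (t + 3) ^ n := by
  intro n hn
  induction n, hn using Nat.le_induction with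
  | base => ring_nf; nlinarith [sq_nonneg t]
  | succ n hn ih =>
    have h1 : 1 ≤ (t + 3) ^ n := Nat.one_le_pow _ _ (by omega)
    rw [pow_succ]
    nlinarith

private lemma aux1 (q n : ℕ) (hq : 3 ≤ q) (hn : 2 ≤ n) : (q - 1) * n + 1 < q ^ n := by
  obtain ⟨t, rfl⟩ : ∃ t, q = t + 3 := ⟨q - 3, by omega⟩
  have := aux1' t n hn
  have : (t + 3) - 1 = t + 2 := by omega
  rw [this]
  exact aux1' t n hn

private lemma aux2 : ∀ n, 4 ≤ n → 4 * n + 1 < 3 ^ n := by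
  intro n hn
  induction n, hn using Nat.le_induction with
  | base => norm_num
  | succ n hn ih =>
    have h1 : 81 ≤ 3 ^ n := by
      calc (81 : ℕ) = 3 ^ 4 := by norm_num
      _ ≤ 3 ^ n := Nat.pow_le_pow_right (by norm_num) hn
    rw [pow_succ]
    nlinarith

/-- If `q > 2` and `q, q-1` are both prime powers, and `n > 1`, then `q^n - 1` has a
prime factor coprime to `q - 1`, unless `q = 3` and `n = 2`. -/
theorem stmt_1 (q n : ℕ) (hq2 : 2 < q) (hq : IsPrimePow q) (hq1 : IsPrimePow (q - 1))
    (hn : 1 < n) (hex : ¬(q = 3 ∧ n = 2)) :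
    ∃ p : ℕ, p.Prime ∧ p ∣ q ^ n - 1 ∧ ¬ p ∣ q - 1 := by
  by_contra hcon
  push_neg at hcon
  -- hcon : ∀ p, p.Prime → p ∣ q ^ n - 1 → p ∣ q - 1
  obtain ⟨r, k, hrp, hk, hrk⟩ := hq1
  have hr : r.Prime := hrp.nat_prime
  haveI : Fact r.Prime := ⟨hr⟩
  have hq1pos : 2 ≤ q - 1 := by omega
  have hqn1 : 1 < q ^ n := Nat.one_lt_pow (by omega) (by omega)
  have hqnne : q ^ n - 1 ≠ 0 := by omega
  have hrq1 : r ∣ q - 1 := by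
    rw [← hrk]; exact dvd_pow_self r (by omega)
  have hrq : ¬ r ∣ q := by
    intro h
    have h1 : r ∣ q - (q - 1) := Nat.dvd_sub h hrq1
    have : q - (q - 1) = 1 := by omega
    rw [this] at h1
    exact hr.one_lt.ne' (Nat.eq_one_of_dvd_one h1) |>.elim
    -- may need fix
  have key : ∀ {d : ℕ}, d.Prime → d ∣ q ^ n - 1 → d = r := by
    intro d hd hdvd
    have h1 : d ∣ r ^ k := hrk ▸ hcon d hd hdvd
    exact (Nat.prime_dvd_prime_iff_eq hd hr).mp (hd.dvd_of_dvd_pow h1)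
  have hv : q ^ n - 1 = r ^ (q ^ n - 1).primeFactorsList.length :=
    Nat.eq_prime_pow_of_unique_prime_dvd hqnne key
  set v := (q ^ n - 1).primeFactorsList.length with hvdef
  have hkval : padicValNat r (q - 1) = k := by rw [← hrk]; exact padicValNat.prime_pow k
  have hvval : padicValNat r (q ^ n - 1) = v := by rw [hv]; exact padicValNat.prime_pow v
  rcases Nat.Prime.eq_two_or_odd' hr with hr2 | hrodd
  · -- r = 2 : q - 1 = 2 ^ k, q odd
    subst hr2
    have hqodd : ¬ 2 ∣ q := hrq
    rcases Nat.even_or_odd n with hne | hno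
    · -- n even
      obtain ⟨m, hm⟩ := hne
      have hq21 : q ^ 2 - 1 ∣ q ^ n - 1 := by
        have := Nat.sub_dvd_pow_sub_pow (q ^ 2) 1 m
        rwa [one_pow, ← pow_mul, show 2 * m = n by omega] at this
      have hq1dvd : q + 1 ∣ q ^ n - 1 := by
        refine dvd_trans ?_ hq21
        have h : q ^ 2 - 1 = (q + 1) * (q - 1) := by
          have := Nat.sq_sub_sq q 1
          simpa using this
        exact ⟨q - 1, h⟩
      obtain ⟨j, hj, hqj⟩ := (Nat.dvd_prime_pow Nat.prime_two).mp (hv ▸ hq1dvd)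
      -- q - 1 = 2 ^ k, q + 1 = 2 ^ j, difference 2 ⇒ k = 1, q = 3
      have h2k : 2 ≤ 2 ^ k := by
        calc (2:ℕ) = 2 ^ 1 := by norm_num
        _ ≤ 2 ^ k := Nat.pow_le_pow_right (by norm_num) (by omega)
      have hdiff : 2 ^ j = 2 ^ k + 2 := by omega
      have hk1 : k = 1 := by
        by_contra hk2
        have hk2' : 2 ≤ k := by
          rcases Nat.eq_or_lt_of_le (show 1 ≤ k by omega) with h | h
          · exact absurd h.symm hk2
          · omega
        have h4k : (4:ℕ) ∣ 2 ^ k := by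
          have : (2:ℕ) ^ 2 ∣ 2 ^ k := pow_dvd_pow 2 hk2'
          simpa using this
        have h6 : 6 ≤ 2 ^ j := by
          have h4 : 4 ≤ 2 ^ k := Nat.le_of_dvd (by positivity) h4k
          omega
        have hj3 : 2 ≤ j := by
          by_contra hj2
          have hj01 : j = 0 ∨ j = 1 := by omega
          rcases hj01 with rfl | rfl <;> norm_num at hdiff <;> omega
        have h4j : (4:ℕ) ∣ 2 ^ j := by
          have : (2:ℕ) ^ 2 ∣ 2 ^ j := pow_dvd_pow 2 hj3
          simpa using this
        omega
      have hq3 : q = 3 := by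
        rw [hk1, pow_one] at hrk; omega
      subst hq3
      have hn2 : n ≠ 2 := fun h => hex ⟨rfl, h⟩
      have hn4 : 4 ≤ n := by omega
      have hne' : Even n := ⟨m, by omega⟩
      have hlte := padicValNat.pow_two_sub_pow (x := 3) (y := 1) (by norm_num)
        (by norm_num) (by norm_num) (show n ≠ 0 by omega) hne'
      simp only [one_pow, show (3:ℕ) + 1 = 4 from rfl, show (3:ℕ) - 1 = 2 from rfl] at hlte
      have h4 : padicValNat 2 4 = 2 := by
        rw [show (4:ℕ) = 2 ^ 2 from rfl]; exact padicValNat.prime_pow 2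
      have h2 : padicValNat 2 2 = 1 := padicValNat.self (by norm_num)
      rw [hvval, h4, h2] at hlte
      set e := padicValNat 2 n with he
      have hre : 2 ^ e ∣ n := pow_padicValNat_dvd
      have hren : 2 ^ e ≤ n := Nat.le_of_dvd (by omega) hre
      have hveq : v = e + 2 := by omega
      have hbound : 3 ^ n - 1 ≤ 4 * n := by
        calc 3 ^ n - 1 = 2 ^ v := hv
        _ = 4 * 2 ^ e := by rw [hveq, pow_add]; ring
        _ ≤ 4 * n := by omega
      have haux := aux2 n hn4
      set A := 3 ^ n
      omega
    · -- n odd : the sum 1 + q + ... + q^(n-1) is odd, > 1, divides q^n - 1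
      set S := ∑ i ∈ Finset.range n, q ^ i with hS
      have hgeo : S * (q - 1) = q ^ n - 1 := by
        have := geom_sum_mul (q : ℤ) n
        have hcast : ((S : ℤ)) * ((q : ℤ) - 1) = (q : ℤ) ^ n - 1 := by
          rw [hS]; push_cast; exact this
        have h1 : ((q : ℤ) - 1) = ((q - 1 : ℕ) : ℤ) := by push_cast [Nat.cast_sub (by omega : 1 ≤ q)]; ring
        have h2 : ((q : ℤ) ^ n - 1) = ((q ^ n - 1 : ℕ) : ℤ) := by
          push_cast [Nat.cast_sub (le_of_lt hqn1)]; ring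
        rw [h1, h2] at hcast
        exact_mod_cast hcast
      have hSdvd : S ∣ q ^ n - 1 := ⟨q - 1, hgeo.symm⟩
      have hSodd : ¬ 2 ∣ S := by
        have hmod : S % 2 = n % 2 := by
          rw [hS, Finset.sum_nat_mod]
          have : ∀ i ∈ Finset.range n, q ^ i % 2 = 1 % 2 := by
            intro i _
            have : ¬ 2 ∣ q ^ i := fun h => hqodd (Nat.Prime.dvd_of_dvd_pow Nat.prime_two h)
            omega
          rw [Finset.sum_congr rfl this]
          simp
        rcases hno with ⟨m, hm⟩
        omega
      have hS1 : 1 < S := by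
        have h01 : ({0, 1} : Finset ℕ) ⊆ Finset.range n := by
          intro x hx
          simp only [Finset.mem_insert, Finset.mem_singleton] at hx
          rcases hx with rfl | rfl <;> simp [Finset.mem_range] <;> omega
        have hsub : ∑ i ∈ ({0, 1} : Finset ℕ), q ^ i ≤ S := by
          exact Finset.sum_le_sum_of_subset h01
        have : ∑ i ∈ ({0, 1} : Finset ℕ), q ^ i = 1 + q := by
          simp [Finset.sum_insert, Finset.sum_singleton]
        omega
      obtain ⟨p, hp, hpS⟩ := Nat.exists_prime_and_dvd (by omega : S ≠ 1)
      have hp2 : p = 2 := key hp (hpS.trans hSdvd)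
      exact hSodd (hp2 ▸ hpS)
  · -- r odd
    have hlte := padicValNat.pow_sub_pow (p := r) hrodd (x := q) (y := 1)
      (by omega) (by simpa using hrq1) hrq (show n ≠ 0 by omega)
    rw [one_pow] at hlte
    rw [hvval, hkval] at hlte
    set e := padicValNat r n with he
    have hre : r ^ e ∣ n := pow_padicValNat_dvd
    have hren : r ^ e ≤ n := Nat.le_of_dvd (by omega) hre
    have hbound : q ^ n - 1 ≤ (q - 1) * n := by
      calc q ^ n - 1 = r ^ v := hv
      _ = r ^ k * r ^ e := by rw [hlte, pow_add]
      _ = (q - 1) * r ^ e := by rw [hrk]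
      _ ≤ (q - 1) * n := Nat.mul_le_mul_left _ hren
    have haux := aux1 q n (by omega) (by omega)
    set A := q ^ n
    set B := (q - 1) * n
    omega
end

section
/- Suppose the characteristic polynomial of C in GL_n(F_q) is irreducible, the multiplicative order of C is k, t divides k, and k/t divides q^m - 1. Then the minimal polynomial of C^t is irreducible of degree at most m. -/
open Matrix Polynomial

set_option maxHeartbeats 1000000

/-- If `C ∈ GL_n(F_q)` has irreducible characteristic polynomial, multiplicative order `k`,
`t ∣ k`, and `k/t ∣ q^m - 1`, then the minimal polynomial of `C^t` is irreducible of degree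
at most `m`. -/
theorem stmt_4 (F : Type*) [Field F] [Fintype F] [DecidableEq F] (n : ℕ)
    (C : Matrix (Fin n) (Fin n) F) (hC : IsUnit C) (hirr : Irreducible C.charpoly)
    (k t m : ℕ) (hk : orderOf C = k) (ht : 0 < t) (htk : t ∣ k) (hm : 0 < m)
    (hdvd : k / t ∣ Fintype.card F ^ m - 1) :
    Irreducible (minpoly F (C ^ t)) ∧ (minpoly F (C ^ t)).natDegree ≤ m := by
  classical
  set q := Fintype.card F with hq
  have hq1 : 1 < q := Fintype.one_lt_card
  -- n is positive
  have hn : n ≠ 0 := by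
    intro h
    have h1 := hirr.natDegree_pos
    rw [Matrix.charpoly_natDegree_eq_dim] at h1
    simp [h] at h1
  haveI : Nonempty (Fin n) := Fin.pos_iff_nonempty.mp (Nat.pos_of_ne_zero hn)
  haveI : Fact (Irreducible C.charpoly) := ⟨hirr⟩
  have hch0 : C.charpoly ≠ 0 := (Matrix.charpoly_monic C).ne_zero
  haveI : Module.Finite F (AdjoinRoot C.charpoly) := (AdjoinRoot.powerBasis hch0).finite
  have hker : ∀ a : Polynomial F, a ∈ Ideal.span {C.charpoly} →
      Polynomial.aeval C a = 0 := by
    intro a ha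
    rw [Ideal.mem_span_singleton] at ha
    obtain ⟨b, rfl⟩ := ha
    rw [_root_.map_mul, Matrix.aeval_self_charpoly, zero_mul]
  let φ : AdjoinRoot C.charpoly →ₐ[F] Matrix (Fin n) (Fin n) F :=
    Ideal.Quotient.liftₐ (Ideal.span {C.charpoly}) (Polynomial.aeval C) hker
  have hφinj : Function.Injective φ := φ.toRingHom.injective
  set α : AdjoinRoot C.charpoly := AdjoinRoot.root C.charpoly with hα
  have hφα : φ α = C := by
    show Ideal.Quotient.liftₐ (Ideal.span {C.charpoly}) (Polynomial.aeval C) hker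
      (Ideal.Quotient.mk (Ideal.span {C.charpoly}) Polynomial.X) = C
    exact Polynomial.aeval_X C
  set β : AdjoinRoot C.charpoly := α ^ t with hβ
  have hφβ : φ β = C ^ t := by rw [hβ, map_pow, hφα]
  have hmin : minpoly F (C ^ t) = minpoly F β := by
    rw [← hφβ, minpoly.algHom_eq φ hφinj]
  have hβint : IsIntegral F β := Algebra.IsIntegral.isIntegral β
  refine ⟨hmin ▸ minpoly.irreducible hβint, ?_⟩
  -- order of α is k
  have horderα : orderOf α = k := by
    have h2 := orderOf_injective φ.toRingHom.toMonoidHom hφinj α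
    rw [show φ.toRingHom.toMonoidHom α = φ α from rfl, hφα, hk] at h2
    exact h2.symm
  -- β ^ (q ^ m - 1) = 1
  have hβpow : β ^ (q ^ m - 1) = 1 := by
    rw [hβ, ← pow_mul]
    rw [← orderOf_dvd_iff_pow_eq_one, horderα]
    calc k = t * (k / t) := (Nat.mul_div_cancel' htk).symm
    _ ∣ t * (q ^ m - 1) := mul_dvd_mul_left t hdvd
  have hβfix : β ^ q ^ m = β := by
    have h1 : q ^ m - 1 + 1 = q ^ m := Nat.succ_pred_eq_of_pos (pow_pos (by omega) m)
    calc β ^ q ^ m = β ^ (q ^ m - 1) * β := by rw [← pow_succ, h1]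
    _ = β := by rw [hβpow, one_mul]
  -- Frobenius
  set p := ringChar F with hp
  haveI hpF : CharP F p := ringChar.charP F
  obtain ⟨s, hpp, hcard⟩ := FiniteField.card F p
  haveI : Fact p.Prime := ⟨hpp⟩
  haveI : CharP (AdjoinRoot C.charpoly) p :=
    charP_of_injective_algebraMap (algebraMap F (AdjoinRoot C.charpoly)).injective p
  have hqm : p ^ (s * m : ℕ) = q ^ m := by rw [pow_mul, ← hcard]
  let Ψ : AdjoinRoot C.charpoly →ₐ[F] AdjoinRoot C.charpoly :=
    { iterateFrobenius (AdjoinRoot C.charpoly) p (s * m) with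
      commutes' := fun x => by
        show (algebraMap F (AdjoinRoot C.charpoly) x) ^ p ^ (s * m : ℕ) = _
        rw [hqm, ← map_pow, FiniteField.pow_card_pow] }
  have hΨdef : ∀ x, Ψ x = x ^ q ^ m := fun x => by
    show x ^ p ^ (s * m : ℕ) = x ^ q ^ m
    rw [hqm]
  -- all elements of the adjoined subalgebra are fixed by Ψ
  set L : Subalgebra F (AdjoinRoot C.charpoly) := Algebra.adjoin F {β} with hL
  have hLle : L ≤ AlgHom.equalizer Ψ (AlgHom.id F (AdjoinRoot C.charpoly)) := by
    rw [hL]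
    apply Algebra.adjoin_le
    intro x hx
    rw [Set.mem_singleton_iff] at hx
    subst hx
    show Ψ β = β
    rw [hΨdef, hβfix]
  have hLfix : ∀ x ∈ L, x ^ q ^ m = x := by
    intro x hx
    have := hLle hx
    rw [AlgHom.mem_equalizer] at this
    rw [← hΨdef, this, AlgHom.id_apply]
  -- counting
  haveI : Fintype (AdjoinRoot C.charpoly) := Module.fintypeOfFintype (AdjoinRoot.powerBasis hch0).basis
  set P : Polynomial (AdjoinRoot C.charpoly) := X ^ q ^ m - X with hP
  have hPdeg : P.natDegree = q ^ m :=
    FiniteField.X_pow_card_pow_sub_X_natDegree_eq _ hm.ne' hq1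
  have hP0 : P ≠ 0 := FiniteField.X_pow_card_pow_sub_X_ne_zero _ hm.ne' hq1
  have hroots : ∀ x ∈ L, x ∈ P.roots := by
    intro x hx
    rw [mem_roots hP0]
    show P.eval x = 0
    rw [hP]
    simp [hLfix x hx]
  have hcardle : Fintype.card L ≤ q ^ m := by
    calc Fintype.card L = (L : Set (AdjoinRoot C.charpoly)).toFinset.card :=
          (Set.toFinset_card _).symm
    _ ≤ P.roots.toFinset.card := by
          apply Finset.card_le_card
          intro x hx
          rw [Set.mem_toFinset] at hx
          rw [Multiset.mem_toFinset]
          exact hroots x hx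
    _ ≤ Multiset.card P.roots := Multiset.toFinset_card_le _
    _ ≤ P.natDegree := P.card_roots'
    _ = q ^ m := hPdeg
  have hcardL : Fintype.card L = q ^ (minpoly F β).natDegree := by
    rw [Module.card_eq_pow_finrank (K := F) (V := L),
      (Algebra.adjoin.powerBasis hβint).finrank, Algebra.adjoin.powerBasis_dim]
  rw [hmin]
  rw [hcardL] at hcardle
  exact (Nat.pow_le_pow_iff_right hq1).mp hcardle
end

section
/- Suppose the characteristic polynomial of a matrix C in GL_n(F_q) is irreducible and the multiplicative order of C is k. For a divisor t of k, the quotient k/t divides q - 1 if and only if C^t is a scalar multiple of the identity matrix. -/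
set_option maxHeartbeats 1000000


open Matrix Polynomial

/-- In a field extension `L` of a finite field `F`, any element satisfying
`x ^ (q - 1) = 1` lies in the image of `F`. -/
lemma aux_mem_range_of_pow_card_sub_one {F L : Type*} [Field F] [Fintype F] [DecidableEq L]
    [Field L] [Algebra F L] (x : L) (hx : x ^ (Fintype.card F - 1) = 1) :
    ∃ z : F, algebraMap F L z = x := by
  classical
  set q := Fintype.card F with hq
  have hq1 : 1 < q := Fintype.one_lt_card
  have hq0 : 0 < q - 1 := by omega
  set s : Finset L := (Polynomial.nthRoots (q - 1) (1 : L)).toFinset with hs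
  have hxs : x ∈ s := by
    rw [hs, Multiset.mem_toFinset, Polynomial.mem_nthRoots hq0]
    exact hx
  set img : Finset L := Finset.univ.image (fun a : Fˣ => algebraMap F L (a : F)) with himg
  have hsub : img ⊆ s := by
    intro y hy
    rw [himg, Finset.mem_image] at hy
    obtain ⟨a, -, rfl⟩ := hy
    rw [hs, Multiset.mem_toFinset, Polynomial.mem_nthRoots hq0, ← map_pow,
      FiniteField.pow_card_sub_one_eq_one (a : F) a.ne_zero, _root_.map_one]
  have hcards : s.card ≤ q - 1 := le_trans (Multiset.toFinset_card_le _)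
    (by exact_mod_cast Polynomial.card_nthRoots (q - 1) (1 : L))
  have hcardimg : img.card = q - 1 := by
    rw [himg, Finset.card_image_of_injective _
      (fun a b hab => Units.ext ((algebraMap F L).injective hab)), Finset.card_univ,
      Fintype.card_units]
  have heq : img = s := Finset.eq_of_subset_of_card_le hsub (by omega)
  rw [← heq, himg, Finset.mem_image] at hxs
  obtain ⟨a, -, ha⟩ := hxs
  exact ⟨a, ha⟩

/-- If `C ∈ GL_n(F_q)` has irreducible characteristic polynomial and multiplicative order `k`,
and `t ∣ k`, then `k/t ∣ q - 1` iff `C^t` is a scalar multiple of the identity. -/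
theorem stmt_5 (F : Type*) [Field F] [Fintype F] [DecidableEq F] (n : ℕ)
    (C : Matrix (Fin n) (Fin n) F) (hC : IsUnit C) (hirr : Irreducible C.charpoly)
    (k t : ℕ) (hk : orderOf C = k) (ht : 0 < t) (htk : t ∣ k) :
    k / t ∣ Fintype.card F - 1 ↔ ∃ z : F, C ^ t = z • (1 : Matrix (Fin n) (Fin n) F) := by
  classical
  -- n is positive
  have hn : 0 < n := by
    rcases Nat.eq_zero_or_pos n with h | h
    · subst h
      have : C.charpoly = 1 := by
        have : IsEmpty (Fin 0) := inferInstance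
        simp [Matrix.charpoly, Matrix.det_isEmpty]
      rw [this] at hirr
      exact absurd hirr not_irreducible_one
    · exact h
  haveI : NeZero n := ⟨hn.ne'⟩
  haveI : Nontrivial (Matrix (Fin n) (Fin n) F) := inferInstance
  -- C has finite order
  obtain ⟨u, hu⟩ := hC
  have hord : orderOf (u : Matrix (Fin n) (Fin n) F) = orderOf u := orderOf_units
  have hfin : IsOfFinOrder u := isOfFinOrder_of_finite u
  have hk0 : 0 < k := by
    rw [← hk, ← hu, hord]
    exact hfin.orderOf_pos
  have hkt0 : 0 < k / t := Nat.div_pos (Nat.le_of_dvd hk0 htk) ht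
  have hinj : Function.Injective (algebraMap F (Matrix (Fin n) (Fin n) F)) :=
    (algebraMap F (Matrix (Fin n) (Fin n) F)).injective
  constructor
  · intro hdvd
    -- the field L = F[X]/(charpoly C)
    haveI : Fact (Irreducible C.charpoly) := ⟨hirr⟩
    set L := AdjoinRoot C.charpoly with hL
    have hcp : (Polynomial.aeval C) C.charpoly = 0 := Matrix.aeval_self_charpoly C
    have hker : ∀ g ∈ Ideal.span {C.charpoly}, (Polynomial.aeval C) g = 0 := by
      intro g hg
      rw [Ideal.mem_span_singleton] at hg
      obtain ⟨h, rfl⟩ := hg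
      rw [_root_.map_mul, hcp, zero_mul]
    set φ : L →+* Matrix (Fin n) (Fin n) F :=
      Ideal.Quotient.lift (Ideal.span {C.charpoly}) (Polynomial.aeval C).toRingHom hker with hφ
    have hφmk : ∀ g : Polynomial F, φ (AdjoinRoot.mk C.charpoly g) = Polynomial.aeval C g :=
      fun g => Ideal.Quotient.lift_mk _ _ _
    have hφinj : Function.Injective φ := RingHom.injective φ
    have hφroot : φ (AdjoinRoot.root C.charpoly) = C := by
      rw [AdjoinRoot.root, hφmk, Polynomial.aeval_X]
    -- (C^t)^(q-1) = 1
    have hCt : (C ^ t) ^ (k / t) = 1 := by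
      rw [← pow_mul, Nat.mul_div_cancel' htk, ← hk]
      exact pow_orderOf_eq_one C
    obtain ⟨m, hm⟩ := hdvd
    have hCq : (C ^ t) ^ (Fintype.card F - 1) = 1 := by
      rw [hm, pow_mul, hCt, one_pow]
    -- pull back to L
    set x : L := (AdjoinRoot.root C.charpoly) ^ t with hx
    have hφx : φ x = C ^ t := by rw [hx, map_pow, hφroot]
    have hxq : x ^ (Fintype.card F - 1) = 1 := by
      apply hφinj
      rw [map_pow, hφx, hCq, _root_.map_one]
    obtain ⟨z, hz⟩ := aux_mem_range_of_pow_card_sub_one x hxq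
    refine ⟨z, ?_⟩
    have h5 : φ (algebraMap F L z) = C ^ t := by rw [hz, hφx]
    rw [AdjoinRoot.algebraMap_eq, AdjoinRoot.of, RingHom.comp_apply, hφmk,
      Polynomial.aeval_C, Algebra.algebraMap_eq_smul_one] at h5
    exact h5.symm
  · rintro ⟨z, hz⟩
    -- z ≠ 0
    have hz0 : z ≠ 0 := by
      rintro rfl
      rw [zero_smul] at hz
      have : IsUnit (C ^ t) := (hu ▸ u.isUnit).pow t
      rw [hz] at this
      exact not_isUnit_zero this
    -- orderOf (C ^ t) = k / t
    have h1 : orderOf (C ^ t) = k / t := by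
      rw [orderOf_pow' C ht.ne', hk, Nat.gcd_eq_right htk]
    -- C ^ t = algebraMap z
    have h2 : C ^ t = algebraMap F (Matrix (Fin n) (Fin n) F) z := by
      rw [hz, Algebra.algebraMap_eq_smul_one]
    -- orderOf of scalar matrix equals orderOf z
    have h3 : orderOf (algebraMap F (Matrix (Fin n) (Fin n) F) z) = orderOf z :=
      orderOf_injective (algebraMap F (Matrix (Fin n) (Fin n) F)).toMonoidHom hinj z
    have h4 : orderOf z ∣ Fintype.card F - 1 := by
      have := orderOf_dvd_card (G := Fˣ) (x := Units.mk0 z hz0)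
      rw [← orderOf_units (y := Units.mk0 z hz0), Units.val_mk0] at this
      rwa [Fintype.card_units] at this
    rw [← h1, h2, h3]
    exact h4
end

section
/- Suppose C is an n×n matrix over F_q with n > 1 whose characteristic polynomial is irreducible, and suppose C^{p_1} is a scalar multiple of the identity for a prime p_1. Then n is the smallest positive integer m such that p_1(q-1) divides q^m - 1. -/
open Matrix

/-- If `C` is an `n × n` matrix over `F_q`, `n > 1`, with irreducible characteristic
polynomial, and `C^{p₁}` is a scalar multiple of the identity for a prime `p₁`, then
`n` is the smallest positive integer `m` such that `p₁(q-1)` divides `q^m - 1`. -/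
theorem stmt_6 (F : Type*) [Field F] [Fintype F] [DecidableEq F] (n : ℕ) (hn : 1 < n)
    (C : Matrix (Fin n) (Fin n) F) (hirr : Irreducible C.charpoly)
    (p₁ : ℕ) (hp₁ : p₁.Prime) (hscalar : ∃ z : F, C ^ p₁ = z • (1 : Matrix (Fin n) (Fin n) F)) :
    IsLeast {m : ℕ | 0 < m ∧ p₁ * (Fintype.card F - 1) ∣ Fintype.card F ^ m - 1} n := by
  classical
  obtain ⟨z, hz⟩ := hscalar
  set q := Fintype.card F with hqdef
  have hq2 : 2 ≤ q := Fintype.one_lt_card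
  have hn0 : 0 < n := by omega
  haveI : NeZero n := ⟨by omega⟩
  have hfmonic : C.charpoly.Monic := Matrix.charpoly_monic C
  have hfne : C.charpoly ≠ 0 := hfmonic.ne_zero
  have hdeg : C.charpoly.natDegree = n := by simpa using Matrix.charpoly_natDegree_eq_dim C
  haveI : Fact (Irreducible C.charpoly) := ⟨hirr⟩
  set K := AdjoinRoot C.charpoly with hK
  set α : K := AdjoinRoot.root C.charpoly with hαdef
  haveI : Module.Finite F K :=
    Module.Finite.of_basis (AdjoinRoot.powerBasis (f := C.charpoly) hfne).basis
  haveI : Finite K := Module.finite_of_finite F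
  letI : Fintype K := Fintype.ofFinite K
  have hfinrank : Module.finrank F K = n := by
    rw [(AdjoinRoot.powerBasis (f := C.charpoly) hfne).finrank,
      AdjoinRoot.powerBasis_dim, hdeg]
  have hcard : Fintype.card K = q ^ n := by
    rw [Module.card_eq_pow_finrank (K := F) (V := K), hfinrank]
  have hmin : minpoly F α = C.charpoly := by
    rw [AdjoinRoot.minpoly_root hfne, hfmonic.leadingCoeff, inv_one, Polynomial.C_1, mul_one]
  -- transfer the scalar relation to α
  have hminC : C.charpoly = minpoly F C :=
    minpoly.eq_of_irreducible_of_monic hirr (Matrix.aeval_self_charpoly C) hfmonic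
  have haevalα : Polynomial.aeval α C.charpoly = 0 := by
    rw [Polynomial.aeval_def, AdjoinRoot.algebraMap_eq]
    exact AdjoinRoot.eval₂_root _
  have hdvd_g : C.charpoly ∣ (Polynomial.X ^ p₁ - Polynomial.C z) := by
    rw [hminC]
    apply minpoly.dvd
    rw [map_sub, map_pow, Polynomial.aeval_X, Polynomial.aeval_C,
      Algebra.algebraMap_eq_smul_one, ← hz, sub_self]
  have hpow : α ^ p₁ = algebraMap F K z := by
    obtain ⟨k, hk⟩ := hdvd_g
    have h0 : Polynomial.aeval α (Polynomial.X ^ p₁ - Polynomial.C z) = 0 := by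
      rw [hk, _root_.map_mul, haevalα, zero_mul]
    rw [map_sub, map_pow, Polynomial.aeval_X, Polynomial.aeval_C, sub_eq_zero] at h0
    exact h0
  have hαne : α ≠ 0 := by
    intro h0
    have := hmin
    rw [h0, minpoly.zero] at this
    have : (Polynomial.X : Polynomial F).natDegree = n := by rw [this, hdeg]
    simp at this
    omega
  have hzne : z ≠ 0 := by
    rintro rfl
    rw [map_zero] at hpow
    exact hαne (pow_eq_zero_iff hp₁.ne_zero |>.mp hpow)
  set t := orderOf α with htdef
  have hα_qn : α ^ (q ^ n - 1) = 1 := by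
    rw [← hcard]
    exact FiniteField.pow_card_sub_one_eq_one α hαne
  have ht_qn : t ∣ q ^ n - 1 := orderOf_dvd_of_pow_eq_one hα_qn
  have ht_dvd_p : t ∣ p₁ * (q - 1) := by
    apply orderOf_dvd_of_pow_eq_one
    rw [pow_mul, hpow, ← map_pow, FiniteField.pow_card_sub_one_eq_one z hzne, _root_.map_one]
  -- key degree lemma
  have key : ∀ m : ℕ, 0 < m → α ^ q ^ m = α → n ≤ m := by
    intro m hm hfix
    haveI : CharP F (ringChar F) := ringChar.charP F
    obtain ⟨r, hpprime, hq⟩ := FiniteField.card F (ringChar F)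
    haveI : Fact (Nat.Prime (ringChar F)) := ⟨hpprime⟩
    haveI : CharP K (ringChar F) :=
      charP_of_injective_algebraMap (algebraMap F K).injective _
    set p := ringChar F
    have hepow : q ^ m = p ^ ((r : ℕ) * m) := by rw [hqdef, hq, pow_mul]
    have hcomm : ∀ c : F,
        (iterateFrobenius K p ((r : ℕ) * m)) (algebraMap F K c) = algebraMap F K c := by
      intro c
      rw [iterateFrobenius_def, ← map_pow, ← hepow, FiniteField.pow_card_pow]
    set Ψ : K →ₐ[F] K := { iterateFrobenius K p ((r : ℕ) * m) with commutes' := hcomm }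
    have hαmem : α ∈ AlgHom.equalizer Ψ (AlgHom.id F K) := by
      rw [AlgHom.mem_equalizer]
      show iterateFrobenius K p ((r : ℕ) * m) α = α
      rw [iterateFrobenius_def, ← hepow]
      exact hfix
    have htop : (⊤ : Subalgebra F K) ≤ AlgHom.equalizer Ψ (AlgHom.id F K) := by
      rw [← AdjoinRoot.adjoinRoot_eq_top (f := C.charpoly)]
      exact Algebra.adjoin_le (Set.singleton_subset_iff.mpr hαmem)
    have hall : ∀ x : K, x ^ q ^ m = x := by
      intro x
      have hx : Ψ x = x := htop (Algebra.mem_top (R := F) (A := K))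
      have : iterateFrobenius K p ((r : ℕ) * m) x = x := hx
      rw [iterateFrobenius_def] at this
      rw [hepow]
      exact this
    obtain ⟨g, hg⟩ := IsCyclic.exists_generator (α := Kˣ)
    have hgord : orderOf g = q ^ n - 1 := by
      rw [orderOf_eq_card_of_forall_mem_zpowers hg, Nat.card_eq_fintype_card, Fintype.card_units, hcard]
    have hqm1 : 1 ≤ q ^ m := Nat.one_le_pow m q (by omega)
    have hgfix : (g : K) ^ (q ^ m - 1) = 1 := by
      have h1 : (g : K) ^ (q ^ m - 1) * (g : K) = 1 * (g : K) := by
        rw [← pow_succ, one_mul]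
        have : q ^ m - 1 + 1 = q ^ m := by omega
        rw [this]
        exact hall g
      exact mul_right_cancel₀ (Units.ne_zero g) h1
    have hgu : g ^ (q ^ m - 1) = 1 := by
      ext
      push_cast
      exact hgfix
    have hdvd : q ^ n - 1 ∣ q ^ m - 1 := hgord ▸ orderOf_dvd_of_pow_eq_one hgu
    have hle : q ^ n - 1 ≤ q ^ m - 1 := Nat.le_of_dvd (by
      have : q ^ 1 ≤ q ^ m := Nat.pow_le_pow_right (by omega) hm
      simp at this
      omega) hdvd
    have hpowle : q ^ n ≤ q ^ m := by
      have h1n : 1 ≤ q ^ n := Nat.one_le_pow n q (by omega)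
      omega
    exact (Nat.pow_le_pow_iff_right (by omega : 1 < q)).mp hpowle
  -- t does not divide q - 1
  have htnd : ¬ t ∣ (q - 1) := by
    intro hdvd
    have h1 : α ^ (q - 1) = 1 := orderOf_dvd_iff_pow_eq_one.mp hdvd
    have h2 : α ^ q ^ 1 = α := by
      rw [pow_one]
      have : q - 1 + 1 = q := by omega
      calc α ^ q = α ^ (q - 1) * α := by rw [← pow_succ, this]
        _ = α := by rw [h1, one_mul]
    have := key 1 one_pos h2
    omega
  have hq1_qn : q - 1 ∣ q ^ n - 1 := by
    simpa using Nat.sub_dvd_pow_sub_pow q 1 n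
  have harith : p₁ * (q - 1) ∣ q ^ n - 1 := by
    have hL : Nat.lcm t (q - 1) ∣ p₁ * (q - 1) :=
      Nat.lcm_dvd ht_dvd_p (dvd_mul_left _ _)
    obtain ⟨c, hc⟩ := Nat.dvd_lcm_right t (q - 1)
    have hcdvd : c ∣ p₁ := by
      have h1 : (q - 1) * c ∣ (q - 1) * p₁ := by
        rw [← hc]
        calc Nat.lcm t (q - 1) ∣ p₁ * (q - 1) := hL
          _ = (q - 1) * p₁ := by ring
      exact (mul_dvd_mul_iff_left (by omega : q - 1 ≠ 0)).mp h1
    rcases hp₁.eq_one_or_self_of_dvd c hcdvd with h1 | hp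
    · exfalso
      apply htnd
      have hlcm : Nat.lcm t (q - 1) = q - 1 := by rw [hc, h1, mul_one]
      exact hlcm ▸ Nat.dvd_lcm_left t (q - 1)
    · have hlcm : Nat.lcm t (q - 1) = p₁ * (q - 1) := by rw [hc, hp, mul_comm]
      rw [← hlcm]
      exact Nat.lcm_dvd ht_qn hq1_qn
  constructor
  · exact ⟨hn0, harith⟩
  · rintro m ⟨hm0, hmdvd⟩
    apply key m hm0
    have ht_m : t ∣ q ^ m - 1 := ht_dvd_p.trans hmdvd
    have h1 : α ^ (q ^ m - 1) = 1 := orderOf_dvd_iff_pow_eq_one.mp ht_m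
    have hqm1 : 1 ≤ q ^ m := Nat.one_le_pow m q (by omega)
    have he : q ^ m - 1 + 1 = q ^ m := by omega
    calc α ^ q ^ m = α ^ (q ^ m - 1) * α := by rw [← pow_succ, he]
      _ = α := by rw [h1, one_mul]
end

section
/- Suppose the characteristic polynomial of C in GL_n(F_q) is irreducible and the multiplicative order of C is k. For any positive integer t such that kt divides q^n - 1, there exists a matrix M with M^t = C, the characteristic polynomial of M is irreducible, and the multiplicative order of M is kt. -/
set_option maxHeartbeats 1000000

open Matrix Polynomial IntermediateField

lemma cyclic_root_aux {G : Type*} [CommGroup G] [Fintype G] [IsCyclic G]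
    (x : G) (k t : ℕ) (hx : orderOf x = k) (hk : 0 < k) (ht : 0 < t)
    (hdvd : k * t ∣ Fintype.card G) :
    ∃ y : G, y ^ t = x ∧ orderOf y = k * t := by
  set N := Fintype.card G with hN
  have hkt : 0 < k * t := Nat.mul_pos hk ht
  have hNpos : 0 < N := Fintype.card_pos
  obtain ⟨g, hg⟩ := IsCyclic.exists_generator (α := G)
  have hog : orderOf g = N := by
    rw [orderOf_eq_card_of_forall_mem_zpowers hg, Nat.card_eq_fintype_card]
  set h : G := g ^ (N / (k * t)) with hh
  have hdvd' : N / (k * t) ∣ N := Nat.div_dvd_of_dvd hdvd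
  have hoh : orderOf h = k * t := by
    rw [hh, orderOf_pow, hog, Nat.gcd_eq_right hdvd', Nat.div_div_self hdvd hNpos.ne']
  obtain ⟨m, hm⟩ : ∃ m : ℕ, g ^ m = x := by
    obtain ⟨m, hm⟩ := mem_powers_iff_mem_zpowers.mpr (hg x)
    exact ⟨m, hm⟩
  have hkN : k ∣ N := dvd_trans (Dvd.intro t rfl) hdvd
  have hgcd : Nat.gcd N m = N / k := by
    have h1 : orderOf (g ^ m) = N / Nat.gcd N m := by rw [orderOf_pow, hog]
    rw [hm, hx] at h1
    have h2 : Nat.gcd N m * k = N := by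
      rw [h1]; exact Nat.mul_div_cancel' (Nat.gcd_dvd_left N m)
    exact (Nat.div_eq_of_eq_mul_left hk h2.symm).symm
  have hdm : N / k ∣ m := hgcd ▸ Nat.gcd_dvd_right N m
  obtain ⟨a, ha⟩ := hdm
  have hcop : Nat.Coprime a k := by
    have hNk : N / k * k = N := Nat.div_mul_cancel hkN
    have : N / k * Nat.gcd k a = N / k := by
      rw [← Nat.gcd_mul_left, hNk, ← ha, hgcd]
    have hpos : 0 < N / k := Nat.div_pos (Nat.le_of_dvd hNpos hkN) hk
    have := Nat.eq_of_mul_eq_mul_left hpos (this.trans (Nat.mul_one _).symm)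
    exact Nat.coprime_comm.mp this
  -- lift a to a unit mod k*t
  haveI : NeZero (k * t) := ⟨hkt.ne'⟩
  haveI : NeZero k := ⟨hk.ne'⟩
  obtain ⟨v, hv⟩ := ZMod.unitsMap_surjective (m := k * t) (Dvd.intro t rfl)
    (ZMod.unitOfCoprime a hcop)
  set b : ℕ := (v : ZMod (k * t)).val with hb
  have hbcop : Nat.Coprime b (k * t) := ZMod.val_coe_unit_coprime v
  have hba : b ≡ a [MOD k] := by
    have h1 : ZMod.castHom (Dvd.intro t rfl) (ZMod k) (v : ZMod (k * t)) = (a : ZMod k) := by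
      have := congrArg Units.val hv
      simpa [ZMod.unitsMap_def] using this
    have h2 : ((b : ℕ) : ZMod (k * t)) = (v : ZMod (k * t)) := by
      rw [hb, ZMod.natCast_val, ZMod.cast_id]
    have h3 : ((b : ZMod k)) = ((a : ZMod k)) := by
      rw [← h1, ← h2, map_natCast]
    exact (ZMod.natCast_eq_natCast_iff _ _ _).mp h3
  refine ⟨h ^ b, ?_, ?_⟩
  · have harith : N / (k * t) * t = N / k := by
      have h1 : N / (k * t) = N / k / t := (Nat.div_div_eq_div_mul N k t).symm
      have h2 : t ∣ N / k := (Nat.dvd_div_iff_mul_dvd hkN).mpr (mul_comm k t ▸ hdvd)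
      rw [h1, Nat.div_mul_cancel h2]
    have hbt : b * t ≡ a * t [MOD k * t] := Nat.ModEq.mul_right' t hba
    calc (h ^ b) ^ t = h ^ (b * t) := by rw [← pow_mul]
      _ = h ^ (a * t) := by rw [pow_eq_pow_iff_modEq, hoh]; exact hbt
      _ = g ^ (N / (k * t) * (a * t)) := by rw [hh, ← pow_mul]
      _ = g ^ (N / k * a) := by
          congr 1
          rw [show N / (k * t) * (a * t) = N / (k * t) * t * a by ring, harith]
      _ = x := by rw [← hm, ha]
  · rw [orderOf_pow, hoh, Nat.Coprime.gcd_eq_one (Nat.coprime_comm.mp hbcop), Nat.div_one]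

/-- If `C ∈ GL_n(F_q)` has irreducible characteristic polynomial and multiplicative order `k`,
and `kt ∣ q^n - 1`, then `C` has a `t`-th root `M` with irreducible characteristic polynomial
and multiplicative order `kt`. -/
theorem stmt_7 (F : Type*) [Field F] [Fintype F] [DecidableEq F] (n : ℕ)
    (C : Matrix (Fin n) (Fin n) F) (hC : IsUnit C) (hirr : Irreducible C.charpoly)
    (k t : ℕ) (hk : orderOf C = k) (ht : 0 < t) (hdvd : k * t ∣ Fintype.card F ^ n - 1) :
    ∃ M : Matrix (Fin n) (Fin n) F,
      M ^ t = C ∧ Irreducible M.charpoly ∧ orderOf M = k * t := by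
  have hn : n ≠ 0 := by
    intro h0
    subst h0
    have hdeg : C.charpoly.natDegree = 0 := by
      rw [Matrix.charpoly_natDegree_eq_dim]; simp
    have : C.charpoly = 1 := (Matrix.charpoly_monic C).natDegree_eq_zero.mp hdeg
    rw [this] at hirr
    exact hirr.not_isUnit isUnit_one
  haveI : Nonempty (Fin n) := ⟨⟨0, Nat.pos_of_ne_zero hn⟩⟩
  have hint : IsIntegral F C := IsIntegral.of_finite F C
  have hmin : minpoly F C = C.charpoly := by
    obtain ⟨r, hr⟩ := C.minpoly_dvd_charpoly
    have hnu : ¬ IsUnit (minpoly F C) := by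
      intro hu
      have h1 : minpoly F C = 1 := (minpoly.monic hint).natDegree_eq_zero.mp
        (Polynomial.natDegree_eq_zero_of_isUnit hu)
      have := minpoly.natDegree_pos hint
      rw [h1] at this
      simp at this
    have hru : IsUnit r := (hirr.isUnit_or_isUnit hr).resolve_left hnu
    refine Polynomial.eq_of_monic_of_associated (minpoly.monic hint) (Matrix.charpoly_monic C)
      ⟨hru.unit, by rw [IsUnit.unit_spec, ← hr]⟩
  -- the field K = F[X]/(charpoly C)
  haveI : Fact (Irreducible C.charpoly) := ⟨hirr⟩
  set K := AdjoinRoot C.charpoly with hK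
  have hev : ∀ g ∈ Ideal.span {C.charpoly}, Polynomial.aeval C g = 0 := by
    intro g hg
    obtain ⟨u, rfl⟩ := Ideal.mem_span_singleton.mp hg
    rw [_root_.map_mul, Matrix.aeval_self_charpoly, zero_mul]
  set ψ₀ : K →+* Matrix (Fin n) (Fin n) F :=
    Ideal.Quotient.lift (Ideal.span {C.charpoly}) (Polynomial.aeval C).toRingHom hev with hψ₀
  have hψ₀mk : ∀ g : F[X], ψ₀ (AdjoinRoot.mk C.charpoly g) = Polynomial.aeval C g := by
    intro g
    exact Ideal.Quotient.lift_mk _ _ _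
  set ψ : K →ₐ[F] Matrix (Fin n) (Fin n) F :=
    { toRingHom := ψ₀,
      commutes' := by
        intro r
        show ψ₀ (algebraMap F K r) = algebraMap F (Matrix (Fin n) (Fin n) F) r
        rw [show algebraMap F K r = AdjoinRoot.mk C.charpoly (Polynomial.C r) from rfl,
          hψ₀mk, Polynomial.aeval_C] } with hψ
  have hinj : Function.Injective ψ := ψ.toRingHom.injective
  set c : K := AdjoinRoot.root C.charpoly with hc
  have hψc : ψ c = C := by
    have : c = AdjoinRoot.mk C.charpoly Polynomial.X := rfl
    show ψ₀ c = C
    rw [this, hψ₀mk, Polynomial.aeval_X]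
  have hp0 : C.charpoly ≠ 0 := (Matrix.charpoly_monic C).ne_zero
  haveI : FiniteDimensional F K := (AdjoinRoot.powerBasis hp0).finite
  have hfr : Module.finrank F K = n := by
    rw [(AdjoinRoot.powerBasis hp0).finrank, AdjoinRoot.powerBasis_dim,
      Matrix.charpoly_natDegree_eq_dim, Fintype.card_fin]
  haveI : Finite K := Module.finite_of_finite F
  haveI : Fintype K := Fintype.ofFinite K
  haveI : DecidableEq K := Classical.decEq K
  have hcardK : Fintype.card K = Fintype.card F ^ n := by
    rw [Module.card_eq_pow_finrank (K := F) (V := K), hfr]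
  -- orderOf c = k
  have hordc : orderOf c = k := by
    have h : orderOf (ψ c) = orderOf c := orderOf_injective ψ.toRingHom.toMonoidHom hinj c
    rw [← h, hψc, hk]
  have hcu : IsUnit c := by
    have hC0 : C ≠ 0 := hC.ne_zero
    have : c ≠ 0 := fun h0 => hC0 (by rw [← hψc, h0, map_zero])
    exact this.isUnit
  obtain ⟨cu, hcu'⟩ := hcu
  have hordcu : orderOf cu = k := by rw [← hordc, ← hcu', orderOf_units]
  have hkpos : 0 < k := by
    rw [← hordcu]
    exact orderOf_pos cu
  have hcardU : Fintype.card Kˣ = Fintype.card F ^ n - 1 := by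
    rw [Fintype.card_units, hcardK]
  obtain ⟨yu, hyt, hyo⟩ := cyclic_root_aux cu k t hordcu hkpos ht (by rw [hcardU]; exact hdvd)
  set y : K := (yu : K) with hy
  have hyt' : y ^ t = c := by rw [hy, ← Units.val_pow_eq_pow_val, hyt, hcu']
  have hordy : orderOf y = k * t := by rw [hy, orderOf_units, hyo]
  refine ⟨ψ y, ?_, ?_, ?_⟩
  · rw [← map_pow, hyt', hψc]
  · -- irreducibility of charpoly (ψ y)
    have hyint : IsIntegral F y := IsIntegral.of_finite F y
    have hminy : minpoly F (ψ y) = minpoly F y := minpoly.algHom_eq ψ hinj y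
    have htop : F⟮y⟯ = ⊤ := by
      rw [eq_top_iff, ← IntermediateField.adjoin_root_eq_top C.charpoly,
        IntermediateField.adjoin_simple_le_iff]
      rw [← hc, ← hyt']
      exact pow_mem (IntermediateField.mem_adjoin_simple_self F y) t
    have hdegy : (minpoly F y).natDegree = n := by
      rw [← IntermediateField.adjoin.finrank hyint, htop, IntermediateField.finrank_top', hfr]
    have hMint : IsIntegral F (ψ y) := IsIntegral.of_finite F (ψ y)
    have hchar : (ψ y).charpoly = minpoly F (ψ y) := by
      obtain ⟨r, hr⟩ := (ψ y).minpoly_dvd_charpoly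
      have hmono : r.Monic :=
        (minpoly.monic hMint).of_mul_monic_left (hr ▸ (ψ y).charpoly_monic)
      have hdeg0 : r.natDegree = 0 := by
        have h1 : (ψ y).charpoly.natDegree = n := by
          rw [Matrix.charpoly_natDegree_eq_dim, Fintype.card_fin]
        have h2 : (minpoly F (ψ y)).natDegree = n := by rw [hminy, hdegy]
        have h3 := hr
        have h4 : (ψ y).charpoly.natDegree
            = (minpoly F (ψ y)).natDegree + r.natDegree := by
          rw [h3, Polynomial.natDegree_mul (minpoly.monic hMint).ne_zero hmono.ne_zero]
        omega
      have : r = 1 := hmono.natDegree_eq_zero.mp hdeg0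
      rw [hr, this, mul_one]
    rw [hchar, hminy]
    exact minpoly.irreducible hyint
  · have h : orderOf (ψ y) = orderOf y := orderOf_injective ψ.toRingHom.toMonoidHom hinj y
    rw [h, hordy]
end

section
/- Suppose C is an n×n matrix over F_q whose characteristic polynomial is irreducible and whose multiplicative order is a power of a prime p_1. Then for any prime p_0 ≠ p_1, there exists a matrix M over F_q with M^{p_0} = C. Moreover, if p_0 divides q^n - 1, M can be chosen so that p_0 divides the multiplicative order of M. -/
set_option maxHeartbeats 1000000


open Matrix

/-- If `C` is an `n × n` matrix over `F_q` with irreducible characteristic polynomial whose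
multiplicative order is a power of a prime `p₁`, then for any prime `p₀ ≠ p₁`, `C` has a
`p₀`-th root; moreover if `p₀ ∣ q^n - 1` then `C` has a `p₀`-th root whose multiplicative
order is a multiple of `p₀`. -/
theorem stmt_8 (F : Type*) [Field F] [Fintype F] [DecidableEq F] (n : ℕ)
    (C : Matrix (Fin n) (Fin n) F) (hirr : Irreducible C.charpoly)
    (p₁ : ℕ) (hp₁ : p₁.Prime) (horder : ∃ k : ℕ, orderOf C = p₁ ^ k)
    (p₀ : ℕ) (hp₀ : p₀.Prime) (hne : p₀ ≠ p₁) :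
    (∃ M : Matrix (Fin n) (Fin n) F, M ^ p₀ = C) ∧
    (p₀ ∣ Fintype.card F ^ n - 1 →
      ∃ M : Matrix (Fin n) (Fin n) F, M ^ p₀ = C ∧ p₀ ∣ orderOf M) := by
  obtain ⟨k, hk⟩ := horder
  have hcop : Nat.Coprime p₀ (orderOf C) := by
    rw [hk]
    exact ((Nat.coprime_primes hp₀ hp₁).mpr hne).pow_right k
  have hordpos : 0 < orderOf C := hk ▸ pow_pos hp₁.pos k
  have htotpos : 0 < Nat.totient (orderOf C) := Nat.totient_pos.mpr hordpos
  set m : ℕ := p₀ ^ (Nat.totient (orderOf C) - 1) with hm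
  have hmodeq : p₀ * m ≡ 1 [MOD orderOf C] := by
    have h1 : p₀ * m = p₀ ^ (orderOf C).totient := by
      rw [hm, ← pow_succ', Nat.sub_add_cancel htotpos]
    rw [h1]
    exact Nat.ModEq.pow_totient hcop
  -- the basic root
  have hroot : (C ^ m) ^ p₀ = C := by
    rw [← pow_mul, mul_comm m p₀]
    calc C ^ (p₀ * m) = C ^ (p₀ * m % orderOf C) := (pow_mod_orderOf C _).symm
      _ = C ^ (1 % orderOf C) := by rw [hmodeq]
      _ = C ^ 1 := pow_mod_orderOf C 1
      _ = C := pow_one C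
  refine ⟨⟨C ^ m, hroot⟩, fun hdvd => ?_⟩
  classical
  -- n ≥ 1
  have hn : n ≠ 0 := by
    rintro rfl
    exact hirr.not_isUnit (by
      have : C.charpoly = 1 := by
        have := C.charpoly_monic
        have hdeg : C.charpoly.natDegree = 0 := by simp [C.charpoly_natDegree_eq_dim]
        exact Polynomial.eq_one_of_monic_natDegree_zero this hdeg
      simp [this])
  have : NeZero n := ⟨hn⟩
  -- build the field K = F[x]/(charpoly C)
  have hfact : Fact (Irreducible C.charpoly) := ⟨hirr⟩
  set K := AdjoinRoot C.charpoly with hK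
  let pb : PowerBasis F K := AdjoinRoot.powerBasis' C.charpoly_monic
  have hdim : pb.dim = n := by
    show C.charpoly.natDegree = n
    rw [C.charpoly_natDegree_eq_dim, Fintype.card_fin]
  have : Module.Finite F K := pb.finite
  have : Finite K := Module.finite_of_finite F
  have : Fintype K := Fintype.ofFinite K
  have hcardK : Fintype.card K = Fintype.card F ^ n := by
    rw [Module.card_fintype pb.basis, Fintype.card_fin, hdim]
  have hcardU : Fintype.card Kˣ = Fintype.card F ^ n - 1 := by
    rw [Fintype.card_units, hcardK]
  have hfactp₀ : Fact p₀.Prime := ⟨hp₀⟩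
  obtain ⟨u, hu⟩ := exists_prime_orderOf_dvd_card (G := Kˣ) p₀ (hcardU ▸ hdvd)
  -- push to matrices
  have hker : ∀ a ∈ Ideal.span {C.charpoly}, Polynomial.aeval C a = 0 := by
    intro a ha
    obtain ⟨b, rfl⟩ := Ideal.mem_span_singleton'.mp ha
    rw [_root_.map_mul, Matrix.aeval_self_charpoly, mul_zero]
  set φ : K →+* Matrix (Fin n) (Fin n) F :=
    Ideal.Quotient.lift (Ideal.span {C.charpoly}) (Polynomial.aeval C).toRingHom hker with hφ
  have hinj : Function.Injective φ := φ.injective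
  have hmk : ∀ g : Polynomial F, φ (AdjoinRoot.mk C.charpoly g) = Polynomial.aeval C g :=
    fun g => Ideal.Quotient.lift_mk _ _ _
  have hCroot : φ (AdjoinRoot.root C.charpoly) = C := by
    rw [AdjoinRoot.root, hmk, Polynomial.aeval_X]
  set ζ : Matrix (Fin n) (Fin n) F := φ (u : K) with hζ
  have hordζ : orderOf ζ = p₀ := by
    have h1 : orderOf (φ.toMonoidHom (u : K)) = orderOf (u : K) :=
      orderOf_injective _ hinj _
    rw [hζ]
    exact h1.trans (orderOf_units.trans hu)
  have hcomm : Commute ζ C := by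
    have h2 : Commute (φ (u : K)) (φ (AdjoinRoot.root C.charpoly)) := by
      unfold Commute SemiconjBy
      rw [← _root_.map_mul, ← _root_.map_mul, mul_comm]
    rwa [hCroot, ← hζ] at h2
  have hcommM : Commute ζ (C ^ m) := hcomm.pow_right m
  refine ⟨ζ * C ^ m, ?_, ?_⟩
  · rw [hcommM.mul_pow, hroot, ← hordζ, pow_orderOf_eq_one, one_mul]
  · have hdvdord : orderOf (C ^ m) ∣ orderOf C := orderOf_pow_dvd m
    have hcop' : Nat.Coprime (orderOf ζ) (orderOf (C ^ m)) :=
      (hordζ ▸ hcop.coprime_dvd_right hdvdord)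
    rw [hcommM.orderOf_mul_eq_mul_orderOf_of_coprime hcop', hordζ]
    exact dvd_mul_right _ _
end

section
/- Let q be a power of a prime p and n ≥ 2. If A is in GL_n(F_q), A is not a scalar multiple of the identity, and the order of the image of A in PGL_n(F_q) is coprime to p, then the minimal polynomial of A is separable (squarefree). -/
open Matrix

/-- The projective order of `A ∈ GL_n(F)`: the order of its image in
`PGL_n(F) = GL_n(F)/Z(GL_n(F))`. -/
noncomputable def projOrder {F : Type*} [Field F] {n : ℕ} (A : GL (Fin n) F) : ℕ :=
  orderOf (QuotientGroup.mk' (Subgroup.center (GL (Fin n) F)) A)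

/-- If `q` is a power of a prime `p`, `n ≥ 2`, `A ∈ GL_n(F_q)` is not a scalar multiple of the
identity, and the projective order of `A` is coprime to `p`, then the minimal polynomial of
`A` is separable. -/
theorem stmt_10 (F : Type*) [Field F] [Fintype F] [DecidableEq F] (p : ℕ) (hp : p.Prime)
    [CharP F p] (n : ℕ) (hn : 2 ≤ n) (A : GL (Fin n) F)
    (hns : ¬∃ z : F, (A : Matrix (Fin n) (Fin n) F) = z • (1 : Matrix (Fin n) (Fin n) F))
    (hco : Nat.Coprime (projOrder A) p) :
    (minpoly F (A : Matrix (Fin n) (Fin n) F)).Separable := by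
  classical
  set m := projOrder A with hm
  -- A^m is central
  have hmem : A ^ m ∈ Subgroup.center (GL (Fin n) F) := by
    have : (QuotientGroup.mk' (Subgroup.center (GL (Fin n) F)) A) ^ m = 1 := pow_orderOf_eq_one _
    rw [← map_pow] at this
    rwa [QuotientGroup.mk'_apply, QuotientGroup.eq_one_iff] at this
  -- hence A^m is a scalar matrix
  have hcomm : ∀ t : TransvectionStruct (Fin n) F,
      Commute t.toMatrix ((A ^ m : GL (Fin n) F) : Matrix (Fin n) (Fin n) F) := by
    intro t
    set T : GL (Fin n) F := ⟨t.toMatrix, t.inv.toMatrix, t.mul_inv, t.inv_mul⟩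
    have := (Subgroup.mem_center_iff.mp hmem T)
    have h2 : ((T * (A ^ m) : GL (Fin n) F) : Matrix (Fin n) (Fin n) F)
        = (((A ^ m) * T : GL (Fin n) F) : Matrix (Fin n) (Fin n) F) := by rw [this]
    simpa [Commute, SemiconjBy, T] using h2
  obtain ⟨c, hc⟩ := Matrix.mem_range_scalar_of_commute_transvectionStruct hcomm
  have hA : ((A : Matrix (Fin n) (Fin n) F)) ^ m = c • (1 : Matrix (Fin n) (Fin n) F) := by
    have : ((A ^ m : GL (Fin n) F) : Matrix (Fin n) (Fin n) F)
        = (A : Matrix (Fin n) (Fin n) F) ^ m := Units.val_pow_eq_pow_val _ _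
    rw [← this, ← hc]
    simp [Matrix.scalar_apply, Matrix.smul_one_eq_diagonal]
  -- c ≠ 0 since A^m is invertible
  have hc0 : c ≠ 0 := by
    rintro rfl
    haveI : Nonempty (Fin n) := ⟨⟨0, by omega⟩⟩
    have hu : IsUnit ((A : Matrix (Fin n) (Fin n) F) ^ m) := by
      have := (A ^ m).isUnit
      rwa [Units.val_pow_eq_pow_val] at this
    rw [hA, zero_smul] at hu
    have := (Matrix.isUnit_iff_isUnit_det _).mp hu
    rw [Matrix.det_zero] at this
    exact not_isUnit_zero this
  -- p does not divide m
  have hpm : ¬ p ∣ m := (Nat.Prime.coprime_iff_not_dvd hp).mp hco.symm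
  have hsep : (Polynomial.X ^ m - Polynomial.C c : Polynomial F).Separable :=
    Polynomial.separable_X_pow_sub_C' p m c hpm hc0
  refine hsep.of_dvd (minpoly.dvd F _ ?_)
  simp [Polynomial.aeval_def, hA, Algebra.algebraMap_eq_smul_one]
end

section
/- Let q be a power of a prime p and n ≥ 2. If A is in GL_n(F_q) and p divides the projective order of A, then some power A' of A has minimal polynomial (x-1)^k for some k with 2 ≤ k ≤ p. -/
open Matrix Polynomial

/-- Let `q` be a power of a prime `p` and `n ≥ 2`. If `A ∈ GL_n(F_q)` and `p` divides the
projective order of `A`, then some power `A'` of `A` has minimal polynomial `(x-1)^k` for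
some `2 ≤ k ≤ p`. -/
theorem stmt_12 (F : Type*) [Field F] [Fintype F] [DecidableEq F] (p : ℕ) (hp : p.Prime)
    [CharP F p] (n : ℕ) (hn : 2 ≤ n) (A : GL (Fin n) F) (hdvd : p ∣ projOrder A) :
    ∃ m k : ℕ, 2 ≤ k ∧ k ≤ p ∧
      minpoly F ((A : Matrix (Fin n) (Fin n) F) ^ m) = (X - 1 : F[X]) ^ k := by
  have hordpos : 0 < orderOf A := orderOf_pos A
  have hproj_dvd : projOrder A ∣ orderOf A := orderOf_map_dvd _ A
  have hpord : p ∣ orderOf A := hdvd.trans hproj_dvd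
  set m := orderOf A / p with hm
  have hmp : m * p = orderOf A := Nat.div_mul_cancel hpord
  have hmpos : 0 < m := Nat.div_pos (Nat.le_of_dvd hordpos hpord) hp.pos
  have hmlt : m < orderOf A := Nat.div_lt_self hordpos hp.one_lt
  haveI : Nonempty (Fin n) := ⟨⟨0, by omega⟩⟩
  set M : Matrix (Fin n) (Fin n) F := (A : Matrix (Fin n) (Fin n) F) ^ m with hM
  have hMp : M ^ p = 1 := by
    have : A ^ (orderOf A) = 1 := pow_orderOf_eq_one A
    have h2 : (A : Matrix (Fin n) (Fin n) F) ^ (orderOf A) = 1 := by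
      rw [← Units.val_pow_eq_pow_val, this, Units.val_one]
    rw [hM, ← pow_mul, hmp, h2]
  haveI : CharP (Matrix (Fin n) (Fin n) F) p := inferInstance
  haveI : Fact p.Prime := ⟨hp⟩
  have hnil : (M - 1) ^ p = 0 := by
    rw [sub_pow_char_of_commute p (Commute.one_right M), hMp, one_pow, sub_self]
  have haev : (Polynomial.aeval M) ((X - 1 : F[X]) ^ p) = 0 := by
    simp [map_pow, map_sub, hnil]
  have hdvd2 : minpoly F M ∣ (X - 1 : F[X]) ^ p :=
    minpoly.dvd F M haev
  have hprime : Prime (X - 1 : F[X]) := by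
    have := Polynomial.prime_X_sub_C (1 : F)
    simpa using this
  obtain ⟨k, hk, hassoc⟩ := (dvd_prime_pow hprime p).mp hdvd2
  have hmonic : (minpoly F M).Monic := minpoly.monic (IsIntegral.of_finite F M)
  have hmonic2 : ((X - 1 : F[X]) ^ k).Monic := by
    apply Polynomial.Monic.pow
    simpa using Polynomial.monic_X_sub_C (1 : F)
  have heq : minpoly F M = (X - 1 : F[X]) ^ k :=
    Polynomial.eq_of_monic_of_associated hmonic hmonic2 hassoc
  refine ⟨m, k, ?_, hk, heq⟩
  by_contra hk2
  interval_cases k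
  · exact minpoly.ne_one F M (by simpa using heq)
  · -- minpoly = X - 1 forces M = 1, so A ^ m = 1, contradiction
    have hroot : (Polynomial.aeval M) (minpoly F M) = 0 := minpoly.aeval F M
    rw [heq] at hroot
    have hM1 : M = 1 := by
      have := sub_eq_zero.mp (by simpa [pow_one] using hroot)
      simpa using this
    have hA1 : A ^ m = 1 := by
      apply Units.ext
      rw [Units.val_pow_eq_pow_val, Units.val_one]
      exact hM1
    have := orderOf_dvd_of_pow_eq_one hA1
    have := Nat.le_of_dvd hmpos this
    omega
end

section
/- Let q be a power of a prime p, and n ≥ 3 with n ≥ 4 when q = 2. Let J be the n×n matrix equal to the identity except with a 1 in the upper-right corner, and let A be the diagonal matrix diag(1, x, 1, ..., 1) for some x ≠ 1 in F_q^* (when q ≠ 2). Then A and J commute, (AJ)^{q^2} = A, and (AJ)^{(q^2-1)^2} = J; in particular both A and J are powers of AJ. -/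
open Matrix

/-- For `q ≠ 2` and `n ≥ 3`, with `J` the identity matrix plus an extra `1` in the upper
right corner and `A = diag(1, x, 1, …, 1)` for `x ≠ 0, 1`: `A` and `J` commute,
`(AJ)^{q²} = A`, and `(AJ)^{(q²-1)²} = J`; in particular `A` and `J` are powers of `AJ`. -/
theorem stmt_13 (F : Type*) [Field F] [Fintype F] [DecidableEq F] (p : ℕ) (hp : p.Prime)
    [CharP F p] (hq : Fintype.card F ≠ 2) (n : ℕ) (hn : 3 ≤ n)
    (x : F) (hx0 : x ≠ 0) (hx1 : x ≠ 1)
    (J A : Matrix (Fin n) (Fin n) F)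
    (hJ : J = 1 + Matrix.single (⟨0, by omega⟩ : Fin n) (⟨n - 1, by omega⟩ : Fin n) 1)
    (hA : A = Matrix.diagonal (fun i : Fin n => if (i : ℕ) = 1 then x else 1)) :
    A * J = J * A ∧ (A * J) ^ (Fintype.card F ^ 2) = A ∧
      (A * J) ^ ((Fintype.card F ^ 2 - 1) ^ 2) = J := by
  set q := Fintype.card F with hqdef
  have hq1 : 1 ≤ q := Fintype.card_pos
  set i0 : Fin n := ⟨0, by omega⟩ with hi0
  set j0 : Fin n := ⟨n - 1, by omega⟩ with hj0
  set E : Matrix (Fin n) (Fin n) F := Matrix.single i0 j0 1 with hE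
  have hij : i0 ≠ j0 := by
    simp only [hi0, hj0, ne_eq, Fin.mk.injEq]
    omega
  -- A * E = E
  have h1 : A * E = E := by
    rw [hA]
    ext i j
    rw [Matrix.diagonal_mul]
    by_cases hi : i = i0
    · subst hi
      simp [hi0]
    · rw [hE, Matrix.single_apply_of_row_ne (Ne.symm hi), mul_zero]
  -- E * A = E
  have h2 : E * A = E := by
    rw [hA]
    ext i j
    rw [Matrix.mul_diagonal]
    by_cases hj : j = j0
    · subst hj
      have : ((j0 : Fin n) : ℕ) ≠ 1 := by simp only [hj0]; omega
      simp [this]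
    · rw [hE, Matrix.single_apply_of_col_ne _ _ (Ne.symm hj), zero_mul]
  -- E * E = 0
  have h3 : E * E = 0 := by
    rw [hE]
    ext i j
    by_cases hi : i = i0
    · subst hi
      rw [Matrix.single_mul_apply_same,
        Matrix.single_apply_of_row_ne hij]
      simp
    · rw [Matrix.single_mul_apply_of_ne (i := i0) (j := j0) (c := 1) (a := i) (b := j) (h := hi)]
      rfl
  have hcomm : A * J = J * A := by
    rw [hJ, mul_add, add_mul, mul_one, one_mul, h1, h2]
  -- J powers
  have hJpow : ∀ m : ℕ, J ^ m = 1 + (m : F) • E := by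
    intro m
    induction m with
    | zero => simp
    | succ k ih =>
      rw [pow_succ, ih, hJ]
      rw [add_mul, one_mul, mul_add, mul_one, smul_mul_assoc, h3]
      push_cast
      module
  -- A powers
  have hApow : ∀ m : ℕ,
      A ^ m = Matrix.diagonal (fun i : Fin n => if (i : ℕ) = 1 then x ^ m else 1) := by
    intro m
    rw [hA, Matrix.diagonal_pow]
    have : (fun i : Fin n => if (i : ℕ) = 1 then x else 1) ^ m
        = fun i : Fin n => if (i : ℕ) = 1 then x ^ m else 1 := by
      funext i
      simp only [Pi.pow_apply]
      split <;> simp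
    rw [this]
  have hAJpow : ∀ m : ℕ, (A * J) ^ m = A ^ m * J ^ m := by
    intro m
    exact Commute.mul_pow hcomm m
  have hcast0 : ((q ^ 2 : ℕ) : F) = 0 := by
    push_cast
    rw [FiniteField.cast_card_eq_zero]
    ring
  constructor
  · exact hcomm
  constructor
  · rw [hAJpow, hJpow, hcast0, zero_smul, add_zero, mul_one, hApow, hA]
    have hxq : x ^ (q ^ 2) = x := by
      rw [pow_two, pow_mul, FiniteField.pow_card, FiniteField.pow_card]
    simp only [hxq]
  · -- (AJ)^((q²-1)²) = J
    have hdvd : (q - 1) ∣ (q ^ 2 - 1) ^ 2 := by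
      have h := Nat.sub_dvd_pow_sub_pow q 1 2
      simp only [one_pow] at h
      exact h.trans (dvd_pow_self _ two_ne_zero)
    obtain ⟨c, hc⟩ := hdvd
    have hxN : x ^ ((q ^ 2 - 1) ^ 2) = 1 := by
      rw [hc, pow_mul, FiniteField.pow_card_sub_one_eq_one x hx0, one_pow]
    have hq2 : 1 ≤ q ^ 2 := Nat.one_le_pow _ _ (by omega)
    have hcast1 : (((q ^ 2 - 1) ^ 2 : ℕ) : F) = 1 := by
      rw [Nat.cast_pow, Nat.cast_sub hq2, hcast0]
      push_cast
      ring
    rw [hAJpow, hJpow, hcast1, one_smul, hApow]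
    rw [hJ]
    have : (Matrix.diagonal (fun i : Fin n => if (i : ℕ) = 1 then x ^ ((q ^ 2 - 1) ^ 2) else 1))
        = (1 : Matrix (Fin n) (Fin n) F) := by
      rw [hxN]
      simp
    rw [this, one_mul]
end

section
/- Let n ≥ 2 and X in GL_n(F_q). There exist a unit upper triangular matrix U and the permutation matrix T swapping coordinates 1 and n such that XUT has nonzero lower-left entry (position (n,1)) and invertible lower-left (n-1)×(n-1) block (rows 2..n, columns 1..n-1). -/
set_option linter.unusedSectionVars false

open Matrix Finset

section Aux

variable {F : Type*} [Field F] [Fintype F] [DecidableEq F]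

/-- product of unit upper triangular matrices (entrywise formulation) -/
lemma uut_mul {N : Type*} [Fintype N] [LinearOrder N] [DecidableEq N]
    {U V : Matrix N N F}
    (hU1 : ∀ i, U i i = 1) (hU0 : ∀ i j, j < i → U i j = 0)
    (hV1 : ∀ i, V i i = 1) (hV0 : ∀ i j, j < i → V i j = 0) :
    (∀ i, (U * V) i i = 1) ∧ (∀ i j, j < i → (U * V) i j = 0) := by
  constructor
  · intro i
    rw [Matrix.mul_apply]
    rw [Finset.sum_eq_single i]
    · rw [hU1, hV1, one_mul]
    · intro k _ hk
      rcases lt_or_gt_of_ne hk with h | h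
      · rw [hU0 _ _ h, zero_mul]
      · rw [hV0 _ _ h, mul_zero]
    · intro h; exact absurd (Finset.mem_univ i) h
  · intro i j hij
    rw [Matrix.mul_apply]
    apply Finset.sum_eq_zero
    intro k _
    rcases lt_or_ge k i with h | h
    · rw [hU0 _ _ h, zero_mul]
    · rw [hV0 _ _ (lt_of_lt_of_le hij h), mul_zero]

/-- IsUnit iff columns span -/
lemma isUnit_iff_span_cols {m : ℕ} (A : Matrix (Fin m) (Fin m) F) :
    IsUnit A ↔ Submodule.span F (Set.range Aᵀ) = ⊤ := by
  rw [← Matrix.mulVec_surjective_iff_isUnit]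
  constructor
  · intro h
    rw [show Submodule.span F (Set.range Aᵀ) = Submodule.span F (Set.range A.col) from rfl,
      ← Matrix.range_mulVecLin, LinearMap.range_eq_top]
    exact h
  · intro h
    have : LinearMap.range A.mulVecLin = ⊤ := by rw [Matrix.range_mulVecLin]; exact h
    rw [LinearMap.range_eq_top] at this
    exact this

end Aux

section Core
variable {F : Type*} [Field F] [Fintype F] [DecidableEq F]

/-- key span fixing lemma -/
lemma span_fix {m : ℕ} (v : Fin (m + 1) → (Fin m → F))
    (hv : Submodule.span F (Set.range v) = ⊤)
    (hnot : ¬ Submodule.span F (Set.range (v ∘ Fin.succ)) = ⊤) :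
    ∃ k₀ : Fin m, Submodule.span F
      (Set.range fun k : Fin m => v k.succ + (if k = k₀ then v 0 else 0)) = ⊤ := by
  -- the truncated family is not linearly independent
  have hfd : Module.finrank F (Fin m → F) = m := by simp
  have hnli : ¬ LinearIndependent F (v ∘ Fin.succ) := by
    intro hli
    exact hnot (hli.span_eq_top_of_card_eq_finrank' (by simp [hfd]))
  rw [Fintype.not_linearIndependent_iff] at hnli
  obtain ⟨g, hg, k₀, hk₀⟩ := hnli
  refine ⟨k₀, ?_⟩
  set u : Fin m → (Fin m → F) := fun k => v k.succ + (if k = k₀ then v 0 else 0) with hu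
  set S := Submodule.span F (Set.range u) with hS
  have hmem : ∀ k : Fin m, k ≠ k₀ → v k.succ ∈ S := by
    intro k hk
    have : u k = v k.succ := by simp [hu, hk]
    rw [← this]
    exact Submodule.subset_span ⟨k, rfl⟩
  have hg' : ∑ k : Fin m, g k • v k.succ = 0 := by simpa [Function.comp] using hg
  have hk₀succ : v k₀.succ ∈ S := by
    have h2 := Finset.add_sum_erase Finset.univ (fun k => g k • v k.succ) (Finset.mem_univ k₀)
    have hrel : g k₀ • v k₀.succ = - ∑ k ∈ Finset.univ.erase k₀, g k • v k.succ :=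
      eq_neg_of_add_eq_zero_left (h2.trans hg')
    have hmem2 : g k₀ • v k₀.succ ∈ S := by
      rw [hrel]
      exact Submodule.neg_mem _ (Submodule.sum_mem _ (fun k hk =>
        Submodule.smul_mem _ _ (hmem k (Finset.ne_of_mem_erase hk))))
    have := S.smul_mem (g k₀)⁻¹ hmem2
    rwa [smul_smul, inv_mul_cancel₀ hk₀, one_smul] at this
  have h0 : v 0 ∈ S := by
    have : u k₀ = v k₀.succ + v 0 := by simp [hu]
    have huk : u k₀ ∈ S := Submodule.subset_span ⟨k₀, rfl⟩
    have : v 0 = u k₀ - v k₀.succ := by rw [this]; abel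
    rw [this]
    exact Submodule.sub_mem _ huk hk₀succ
  rw [eq_top_iff, ← hv]
  rw [Submodule.span_le]
  rintro x ⟨i, rfl⟩
  rcases Fin.eq_zero_or_eq_succ i with rfl | ⟨k, rfl⟩
  · exact h0
  · by_cases hk : k = k₀
    · subst hk; exact hk₀succ
    · exact hmem k hk

end Core

section Core2
variable {F : Type*} [Field F] [Fintype F] [DecidableEq F]

lemma core_lemma {m : ℕ} (hm : 1 ≤ m) (X : Matrix (Fin (m + 1)) (Fin (m + 1)) F)
    (hX : IsUnit X) :
    ∃ U : Matrix (Fin (m + 1)) (Fin (m + 1)) F,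
      (∀ i, U i i = 1) ∧ (∀ i j, j < i → U i j = 0) ∧
      (X * U) (Fin.last m) (Fin.last m) ≠ 0 ∧
      IsUnit ((X * U).submatrix Fin.succ Fin.succ) := by
  classical
  -- columns of X, projected to last m coordinates
  set π : (Fin (m + 1) → F) →ₗ[F] (Fin m → F) := LinearMap.funLeft F F Fin.succ with hπ
  have hπsurj : Function.Surjective π :=
    LinearMap.funLeft_surjective_of_injective F F _ (Fin.succ_injective m)
  set v : Fin (m + 1) → (Fin m → F) := fun j => π (Xᵀ j) with hvdef
  have hv : Submodule.span F (Set.range v) = ⊤ := by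
    have hspan : Submodule.span F (Set.range Xᵀ) = ⊤ := (isUnit_iff_span_cols X).mp hX
    have : Set.range v = π '' Set.range Xᵀ := by
      rw [hvdef]; exact Set.range_comp _ _
    rw [this, ← Submodule.map_span, hspan, Submodule.map_top, LinearMap.range_eq_top]
    exact hπsurj
  -- Stage 1 : make the trailing block invertible
  obtain ⟨U₁, hU₁d, hU₁l, hblk⟩ :
      ∃ U₁ : Matrix (Fin (m + 1)) (Fin (m + 1)) F,
        (∀ i, U₁ i i = 1) ∧ (∀ i j, j < i → U₁ i j = 0) ∧
        IsUnit ((X * U₁).submatrix Fin.succ Fin.succ) := by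
    by_cases h1 : Submodule.span F (Set.range (v ∘ Fin.succ)) = ⊤
    · refine ⟨1, fun i => Matrix.one_apply_eq i, fun i j h => Matrix.one_apply_ne (ne_of_gt h), ?_⟩
      rw [isUnit_iff_span_cols]
      have : ((X * 1).submatrix Fin.succ Fin.succ)ᵀ = v ∘ Fin.succ := by
        ext j i
        simp [hvdef, hπ, LinearMap.funLeft_apply]
      rw [this, h1]
    · obtain ⟨k₀, hk₀⟩ := span_fix v hv h1
      set E := Matrix.single (0 : Fin (m + 1)) k₀.succ (1 : F) with hE
      refine ⟨1 + E, ?_, ?_, ?_⟩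
      · intro i
        have : E i i = 0 := by
          apply Matrix.single_apply_of_ne
          intro ⟨h0, hs⟩
          exact (Fin.succ_ne_zero k₀) (hs.trans h0.symm)
        simp [this]
      · intro i j hij
        have : E i j = 0 := by
          apply Matrix.single_apply_of_ne
          intro ⟨h0, hs⟩
          rw [← h0] at hij
          exact (Fin.not_lt_zero j) hij
        simp [this, Matrix.one_apply_ne (ne_of_gt hij)]
      · rw [isUnit_iff_span_cols]
        have heq : ((X * (1 + E)).submatrix Fin.succ Fin.succ)ᵀ
            = fun k : Fin m => v k.succ + (if k = k₀ then v 0 else 0) := by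
          ext j i
          simp only [Matrix.transpose_apply, Matrix.submatrix_apply, Matrix.mul_add, mul_one,
            Matrix.add_apply]
          congr 1
          by_cases hj : j = k₀
          · subst hj
            rw [hE, Matrix.mul_single_apply_same, if_pos rfl, mul_one]
            simp [hvdef, hπ, LinearMap.funLeft_apply]
          · rw [hE, Matrix.mul_single_apply_of_ne
                (hbj := fun h => hj (Fin.succ_injective m h)), if_neg hj]
            simp
        rw [heq, hk₀]
  -- Stage 2 : fix the corner entry
  set M := X * U₁ with hM
  by_cases hc : M (Fin.last m) (Fin.last m) = 0
  · -- need a nonzero entry in the last row of the block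
    set lst : Fin m := ⟨m - 1, by omega⟩ with hlst
    have hlsts : lst.succ = Fin.last m := by
      ext
      simp [hlst, Fin.last]
      omega
    have hex : ∃ k : Fin m, M (Fin.last m) k.succ ≠ 0 := by
      by_contra hall
      push_neg at hall
      have hdet : (M.submatrix Fin.succ Fin.succ).det = 0 := by
        apply Matrix.det_eq_zero_of_row_eq_zero lst
        intro j
        rw [Matrix.submatrix_apply, hlsts]
        exact hall j
      have := hblk
      rw [Matrix.isUnit_iff_isUnit_det, hdet] at this
      exact (by simpa using this : False)
    obtain ⟨k, hk⟩ := hex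
    have hkl : k.succ ≠ Fin.last m := by
      intro h
      rw [h] at hk
      exact hk hc
    have hklst : k ≠ lst := by
      intro h
      rw [h, hlsts] at hkl
      exact hkl rfl
    set G := (1 : Matrix (Fin (m + 1)) (Fin (m + 1)) F)
      + Matrix.single k.succ (Fin.last m) (1 : F) with hG
    have hGd : ∀ i, G i i = 1 := by
      intro i
      have : Matrix.single k.succ (Fin.last m) (1 : F) i i = 0 := by
        apply Matrix.single_apply_of_ne
        intro ⟨h1, h2⟩
        exact hkl (h1.trans h2.symm)
      simp [hG, this]
    have hGl : ∀ i j, j < i → G i j = 0 := by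
      intro i j hij
      have : Matrix.single k.succ (Fin.last m) (1 : F) i j = 0 := by
        apply Matrix.single_apply_of_ne
        intro ⟨h1, h2⟩
        rw [← h1, ← h2] at hij
        exact absurd hij (not_lt.mpr (Fin.le_last k.succ))
      simp [hG, this, Matrix.one_apply_ne (ne_of_gt hij)]
    obtain ⟨hUd, hUl⟩ := uut_mul hU₁d hU₁l hGd hGl
    refine ⟨U₁ * G, hUd, hUl, ?_, ?_⟩
    · rw [← Matrix.mul_assoc, ← hM, hG, Matrix.mul_add, mul_one, Matrix.add_apply,
        Matrix.mul_single_apply_same, hc, mul_one, zero_add]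
      exact hk
    · rw [← Matrix.mul_assoc, ← hM]
      have heq : ((M * G).submatrix Fin.succ Fin.succ)
          = (M.submatrix Fin.succ Fin.succ).updateCol lst
              (fun i => (M.submatrix Fin.succ Fin.succ) i lst + (M.submatrix Fin.succ Fin.succ) i k) := by
        ext i j
        rw [Matrix.updateCol_apply, Matrix.submatrix_apply, hG, Matrix.mul_add, mul_one,
          Matrix.add_apply]
        by_cases hj : j = lst
        · subst hj
          rw [if_pos rfl, hlsts, Matrix.mul_single_apply_same, mul_one]
          simp [hlsts]
        · rw [if_neg hj, Matrix.mul_single_apply_of_ne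
            (hbj := fun h => hj (Fin.succ_injective m (h.trans hlsts.symm))), add_zero]
          simp
      rw [Matrix.isUnit_iff_isUnit_det, heq,
        Matrix.det_updateCol_add_self _ (Ne.symm hklst)]
      exact (Matrix.isUnit_iff_isUnit_det _).mp hblk
  · exact ⟨U₁, hU₁d, hU₁l, hc, hblk⟩

end Core2

/-- For any `X ∈ GL_n(F_q)` (`n ≥ 2`) there is a unit upper triangular matrix `U` such that,
with `T` the permutation matrix swapping coordinates `1` and `n`, the matrix `X U T` has
nonzero lower-left entry and invertible lower-left `(n-1) × (n-1)` block. -/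
theorem stmt_15 (F : Type*) [Field F] [Fintype F] [DecidableEq F] (n : ℕ) (hn : 2 ≤ n)
    (T : Matrix (Fin n) (Fin n) F)
    (hT : T = Matrix.of fun i j : Fin n =>
      if j = Equiv.swap (⟨0, by omega⟩ : Fin n) (⟨n - 1, by omega⟩ : Fin n) i then 1 else 0)
    (X : Matrix (Fin n) (Fin n) F) (hX : IsUnit X) :
    ∃ U : Matrix (Fin n) (Fin n) F,
      (∀ i : Fin n, U i i = 1) ∧ (∀ i j : Fin n, j < i → U i j = 0) ∧
      (X * U * T) (⟨n - 1, by omega⟩ : Fin n) (⟨0, by omega⟩ : Fin n) ≠ 0 ∧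
      IsUnit ((X * U * T).submatrix
        (fun i : Fin (n - 1) => (⟨(i : ℕ) + 1, by omega⟩ : Fin n))
        (fun j : Fin (n - 1) => (⟨(j : ℕ), by omega⟩ : Fin n))) := by
  obtain ⟨m, rfl⟩ : ∃ m, n = m + 2 := ⟨n - 2, by omega⟩
  set σ : Equiv.Perm (Fin (m + 2)) :=
    Equiv.swap (⟨0, by omega⟩ : Fin (m + 2)) (⟨m + 2 - 1, by omega⟩ : Fin (m + 2)) with hσ
  have hmulT : ∀ (A : Matrix (Fin (m + 2)) (Fin (m + 2)) F) (i j : Fin (m + 2)),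
      (A * T) i j = A i (σ j) := by
    intro A i j
    rw [hT, Matrix.mul_apply]
    rw [Finset.sum_eq_single (σ j)]
    · rw [Matrix.of_apply, if_pos (by simp [hσ, Equiv.swap_apply_self]), mul_one]
    · intro k _ hk
      rw [Matrix.of_apply, if_neg, mul_zero]
      intro h
      apply hk
      rw [h, hσ]
      simp [Equiv.swap_apply_self]
    · intro h; exact absurd (Finset.mem_univ _) h
  obtain ⟨U, hUd, hUl, hcorner, hblk⟩ := core_lemma (m := m + 1) (by omega) X hX
  refine ⟨U, hUd, hUl, ?_, ?_⟩
  · rw [hmulT]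
    have : σ (⟨0, by omega⟩ : Fin (m + 2)) = ⟨m + 2 - 1, by omega⟩ := Equiv.swap_apply_left _ _
    rw [this]
    exact hcorner
  · show IsUnit ((X * U * T).submatrix
        (fun i : Fin (m + 1) => (⟨(i : ℕ) + 1, by omega⟩ : Fin (m + 2)))
        (fun j : Fin (m + 1) => (⟨(j : ℕ), by omega⟩ : Fin (m + 2))))
    have hσval : ∀ x : Fin (m + 2),
        ((σ x : Fin (m + 2)) : ℕ)
          = if (x : ℕ) = 0 then m + 1 else if (x : ℕ) = m + 1 then 0 else (x : ℕ) := by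
      intro x
      rw [hσ, Equiv.swap_apply_def]
      simp only [Fin.ext_iff]
      split_ifs <;> simp_all <;> omega
    have hrange : (Set.range fun j : Fin (m + 1) => σ (⟨(j : ℕ), by omega⟩ : Fin (m + 2)))
        = Set.range (Fin.succ : Fin (m + 1) → Fin (m + 2)) := by
      ext x
      constructor
      · rintro ⟨j, rfl⟩
        by_cases hj : (j : ℕ) = 0
        · exact ⟨⟨m, by omega⟩, Fin.ext (by simp [hσval, hj])⟩
        · have h2 : (j : ℕ) ≠ m + 1 := by omega
          exact ⟨⟨(j : ℕ) - 1, by omega⟩, Fin.ext (by simp [hσval, hj, h2]; omega)⟩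
      · rintro ⟨k, rfl⟩
        by_cases hk : (k : ℕ) = m
        · exact ⟨⟨0, by omega⟩, Fin.ext (by simp [hσval]; omega)⟩
        · have h1 : (k : ℕ) + 1 ≠ 0 := by omega
          have h2 : (k : ℕ) + 1 ≠ m + 1 := by omega
          exact ⟨⟨(k : ℕ) + 1, by omega⟩, Fin.ext (by simp [hσval, h1, h2, hk])⟩
    have h1 : ((X * U * T).submatrix
          (fun i : Fin (m + 1) => (⟨(i : ℕ) + 1, by omega⟩ : Fin (m + 2)))
          (fun j : Fin (m + 1) => (⟨(j : ℕ), by omega⟩ : Fin (m + 2))))ᵀ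
        = (fun x : Fin (m + 2) => fun i : Fin (m + 1) => (X * U) i.succ x)
            ∘ (fun j : Fin (m + 1) => σ (⟨(j : ℕ), by omega⟩ : Fin (m + 2))) := by
      ext j i
      rw [Matrix.transpose_apply, Matrix.submatrix_apply, hmulT]
      rfl
    have h2 : (((X * U).submatrix Fin.succ Fin.succ))ᵀ
        = (fun x : Fin (m + 2) => fun i : Fin (m + 1) => (X * U) i.succ x)
            ∘ (Fin.succ : Fin (m + 1) → Fin (m + 2)) := by
      ext j i
      rfl
    rw [isUnit_iff_span_cols] at hblk ⊢
    rw [h1, Set.range_comp, hrange, ← Set.range_comp, ← h2]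
    exact hblk
end

section
/- Let p be the characteristic of F_q and 2 ≤ n ≤ p. Let A in GL_n(F_q) be a single Jordan block with eigenvalue λ in F_q^* (i.e., λ on the diagonal, 1 on the superdiagonal, 0 elsewhere). If B^k = z·A for some z in F_q^* and positive integer k, then B is a scalar multiple of a power of A. -/
open Matrix

/-- A strictly upper triangular `n × n` matrix is nilpotent with `C ^ n = 0`. -/
lemma strictUpper_pow_eq_zero {F : Type*} [Field F] {n : ℕ}
    (C : Matrix (Fin n) (Fin n) F)
    (h : ∀ i j : Fin n, (j : ℕ) ≤ (i : ℕ) → C i j = 0) : C ^ n = 0 := by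
  suffices H : ∀ t, ∀ i j : Fin n, (j : ℕ) < (i : ℕ) + t → (C ^ t) i j = 0 by
    ext i j
    simp only [Matrix.zero_apply]
    exact H n i j (lt_of_lt_of_le j.2 (Nat.le_add_left n i))
  intro t
  induction t with
  | zero =>
    intro i j hij
    simp only [Nat.add_zero] at hij
    rw [pow_zero, Matrix.one_apply_ne]
    intro e
    exact absurd (congrArg Fin.val e) (Nat.ne_of_gt hij)
  | succ t ih =>
    intro i j hij
    rw [pow_succ', Matrix.mul_apply]
    apply Finset.sum_eq_zero
    intro l _
    by_cases hl : (l : ℕ) ≤ (i : ℕ)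
    · rw [h i l hl, zero_mul]
    · rw [ih l j (by omega), mul_zero]

/-- Let `p` be the characteristic of `F_q` and `2 ≤ n ≤ p`. Let `A` be the `n × n` Jordan
block with eigenvalue `λ ≠ 0`. If `B^k = z • A` for some `z ≠ 0` and `k > 0`, then `B` is a
scalar multiple of a power of `A`. -/
theorem stmt_18 (F : Type*) [Field F] [Fintype F] [DecidableEq F] (p : ℕ) (hp : p.Prime)
    [CharP F p] (n : ℕ) (hn2 : 2 ≤ n) (hnp : n ≤ p)
    (lam : F) (hlam : lam ≠ 0)
    (A : Matrix (Fin n) (Fin n) F)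
    (hA : A = Matrix.of fun i j : Fin n =>
      if i = j then lam else if (j : ℕ) = (i : ℕ) + 1 then 1 else 0)
    (B : Matrix (Fin n) (Fin n) F) (z : F) (hz : z ≠ 0) (k : ℕ) (hk : 0 < k)
    (heq : B ^ k = z • A) :
    ∃ (w : F) (s : ℕ), B = w • A ^ s := by
  haveI := Fact.mk hp
  have hn0 : 0 < n := by omega
  haveI : Nonempty (Fin n) := ⟨⟨0, hn0⟩⟩
  -- B commutes with A
  have hBA : B * A = A * B := by
    have h1 : B * B ^ k = B ^ k * B := ((Commute.refl B).pow_right k).eq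
    rw [heq] at h1
    have h2 := congrArg (fun X => z⁻¹ • X) h1
    simpa [mul_smul_comm, smul_mul_assoc, smul_smul, inv_mul_cancel₀ hz] using h2
  -- the nilpotent part N of A
  set N : Matrix (Fin n) (Fin n) F := A - lam • 1 with hNdef
  have hAN : A = lam • 1 + N := by rw [hNdef]; abel
  have hNval : ∀ i j : Fin n, N i j = if (j : ℕ) = (i : ℕ) + 1 then 1 else 0 := by
    intro i j
    simp only [hNdef, Matrix.sub_apply, Matrix.smul_apply, Matrix.one_apply, hA,
      Matrix.of_apply, smul_eq_mul]
    by_cases hij : i = j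
    · subst hij; simp
    · simp [hij]
  have hBN : B * N = N * B := by
    rw [hNdef, Matrix.mul_sub, Matrix.sub_mul, hBA, mul_smul_comm, smul_mul_assoc,
      mul_one, one_mul]
  have hBNc : Commute B N := hBN
  -- entrywise consequences of commuting with N
  have hmulr : ∀ (i j : Fin n), (B * N) i j =
      if h : 0 < (j : ℕ) then B i ⟨(j : ℕ) - 1, by omega⟩ else 0 := by
    intro i j
    rw [Matrix.mul_apply]
    split_ifs with hj
    · rw [Finset.sum_eq_single (⟨(j : ℕ) - 1, by omega⟩ : Fin n)]
      · rw [hNval, if_pos (show (j : ℕ) = (j : ℕ) - 1 + 1 by omega), mul_one]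
      · intro l _ hl
        rw [hNval, if_neg, mul_zero]
        intro e
        exact hl (Fin.ext (show (l : ℕ) = (j : ℕ) - 1 by omega))
      · intro habs; exact absurd (Finset.mem_univ _) habs
    · apply Finset.sum_eq_zero
      intro l _
      rw [hNval, if_neg (by omega), mul_zero]
  have hmull : ∀ (i j : Fin n), (N * B) i j =
      if h : (i : ℕ) + 1 < n then B ⟨(i : ℕ) + 1, h⟩ j else 0 := by
    intro i j
    rw [Matrix.mul_apply]
    split_ifs with hi
    · rw [Finset.sum_eq_single (⟨(i : ℕ) + 1, hi⟩ : Fin n)]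
      · rw [hNval, if_pos (show ((⟨(i : ℕ) + 1, hi⟩ : Fin n) : ℕ) = (i : ℕ) + 1 from rfl),
          one_mul]
      · intro l _ hl
        rw [hNval, if_neg, zero_mul]
        intro e
        exact hl (Fin.ext (show (l : ℕ) = (i : ℕ) + 1 from e))
      · intro habs; exact absurd (Finset.mem_univ _) habs
    · apply Finset.sum_eq_zero
      intro l _
      rw [hNval, if_neg (by omega), zero_mul]
  have hentry : ∀ i j : Fin n, (B * N) i j = (N * B) i j := by
    intro i j; rw [hBN]
  -- shift relations
  have K1 : ∀ (a b : ℕ) (ha : a + 1 < n) (hb : b + 1 < n),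
      B ⟨a + 1, ha⟩ ⟨b + 1, hb⟩ = B ⟨a, Nat.lt_of_succ_lt ha⟩ ⟨b, Nat.lt_of_succ_lt hb⟩ := by
    intro a b ha hb
    have h := hentry ⟨a, Nat.lt_of_succ_lt ha⟩ ⟨b + 1, hb⟩
    rw [hmulr, hmull, dif_pos (show 0 < ((⟨b + 1, hb⟩ : Fin n) : ℕ) from Nat.succ_pos b),
      dif_pos (show ((⟨a, Nat.lt_of_succ_lt ha⟩ : Fin n) : ℕ) + 1 < n from ha)] at h
    exact h.symm
  have K2 : ∀ (a : ℕ) (ha : a + 1 < n), B ⟨a + 1, ha⟩ ⟨0, hn0⟩ = 0 := by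
    intro a ha
    have h := hentry ⟨a, Nat.lt_of_succ_lt ha⟩ ⟨0, hn0⟩
    rw [hmulr, hmull, dif_neg (show ¬ 0 < ((⟨0, hn0⟩ : Fin n) : ℕ) from lt_irrefl 0),
      dif_pos (show ((⟨a, Nat.lt_of_succ_lt ha⟩ : Fin n) : ℕ) + 1 < n from ha)] at h
    exact h.symm
  -- B is upper triangular
  have G1 : ∀ (b : ℕ) (a : ℕ) (ha : a < n) (hb : b < n), b < a → B ⟨a, ha⟩ ⟨b, hb⟩ = 0 := by
    intro b
    induction b with
    | zero =>
      intro a ha hb hba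
      obtain ⟨a', rfl⟩ : ∃ a', a = a' + 1 := ⟨a - 1, by omega⟩
      exact K2 a' ha
    | succ b ih =>
      intro a ha hb hba
      obtain ⟨a', rfl⟩ : ∃ a', a = a' + 1 := ⟨a - 1, by omega⟩
      rw [K1 a' b ha hb]
      exact ih a' (Nat.lt_of_succ_lt ha) (Nat.lt_of_succ_lt hb) (by omega)
  -- diagonal of B is constant
  have G2 : ∀ (m : ℕ) (h : m < n), B ⟨m, h⟩ ⟨m, h⟩ = B ⟨0, hn0⟩ ⟨0, hn0⟩ := by
    intro m
    induction m with
    | zero => intro h; rfl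
    | succ m ih =>
      intro h
      rw [K1 m m h h]
      exact ih (Nat.lt_of_succ_lt h)
  set b0 : F := B ⟨0, hn0⟩ ⟨0, hn0⟩ with hb0def
  set M : Matrix (Fin n) (Fin n) F := B - b0 • 1 with hMdef
  have hBdecomp : B = b0 • 1 + M := by rw [hMdef]; abel
  have hMlow : ∀ i j : Fin n, (j : ℕ) ≤ (i : ℕ) → M i j = 0 := by
    intro i j hij
    rw [hMdef, Matrix.sub_apply, Matrix.smul_apply, Matrix.one_apply, smul_eq_mul]
    rcases eq_or_lt_of_le hij with heqv | hlt
    · have e : j = i := Fin.ext heqv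
      subst e
      rw [if_pos rfl, mul_one, hb0def]
      have hB : B j j = B ⟨0, hn0⟩ ⟨0, hn0⟩ := G2 (j : ℕ) j.2
      rw [hB, sub_self]
    · have hB0 : B i j = 0 := G1 (j : ℕ) (i : ℕ) i.2 j.2 hlt
      rw [hB0, if_neg (fun e => absurd (congrArg Fin.val e) (by omega)), mul_zero, sub_zero]
  have hNlow : ∀ i j : Fin n, (j : ℕ) ≤ (i : ℕ) → N i j = 0 := by
    intro i j hij
    rw [hNval, if_neg (by omega)]
  have hMn : M ^ n = 0 := strictUpper_pow_eq_zero M hMlow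
  have hNn : N ^ n = 0 := strictUpper_pow_eq_zero N hNlow
  -- commutation facts
  have hBs : Commute B (b0 • (1 : Matrix (Fin n) (Fin n) F)) := (Commute.one_right B).smul_right b0
  have hBM : Commute B M := (Commute.refl B).sub_right hBs
  have hNM : Commute N M := hBNc.symm.sub_right ((Commute.one_right N).smul_right b0)
  -- geometric sum decomposition of B^k - b0^k • 1
  set Q : Matrix (Fin n) (Fin n) F :=
    ∑ i ∈ Finset.range k, B ^ i * (b0 • (1 : Matrix (Fin n) (Fin n) F)) ^ (k - 1 - i) with hQdef
  have hgeom : Q * M = B ^ k - (b0 ^ k) • 1 := by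
    have := hBs.geom_sum₂_mul k
    rw [hQdef, hMdef]
    rw [this, smul_pow, one_pow]
  have hQM : Commute M Q := by
    rw [hQdef]
    apply Commute.sum_right
    intro i _
    exact (hBM.symm.pow_right i).mul_right
      (((Commute.one_right M).smul_right b0).pow_right _)
  have hQN : Commute N Q := by
    rw [hQdef]
    apply Commute.sum_right
    intro i _
    exact (hBNc.symm.pow_right i).mul_right
      (((Commute.one_right N).smul_right b0).pow_right _)
  have hQMnil : IsNilpotent (Q * M) := by
    refine ⟨n, ?_⟩
    rw [hQM.symm.mul_pow, hMn, mul_zero]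
  have hNnil : IsNilpotent ((z : F) • N) := ⟨n, by rw [smul_pow, hNn, smul_zero]⟩
  -- b0 ^ k = z * lam
  have hc1 : (z * lam - b0 ^ k) • (1 : Matrix (Fin n) (Fin n) F) = Q * M - z • N := by
    rw [hgeom, heq, hAN, smul_add, smul_smul, sub_smul]
    abel
  have hcnil : IsNilpotent ((z * lam - b0 ^ k) • (1 : Matrix (Fin n) (Fin n) F)) := by
    rw [hc1]
    exact Commute.isNilpotent_sub (((hQN.symm).mul_left hNM.symm).smul_right z) hQMnil hNnil
  have hb0k : b0 ^ k = z * lam := by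
    obtain ⟨m, hm⟩ := hcnil
    rw [smul_pow, one_pow] at hm
    have hm0 := congrFun (congrFun hm ⟨0, hn0⟩) ⟨0, hn0⟩
    simp only [Matrix.smul_apply, Matrix.one_apply_eq, smul_eq_mul, mul_one,
      Matrix.zero_apply] at hm0
    have hmz : m ≠ 0 := by
      intro e; rw [e, pow_zero] at hm0; exact one_ne_zero hm0
    have := pow_eq_zero_iff hmz |>.mp hm0
    have := sub_eq_zero.mp this
    exact this.symm
  have hb0 : b0 ≠ 0 := by
    intro e
    rw [e, zero_pow hk.ne'] at hb0k
    exact (mul_ne_zero hz hlam) hb0k.symm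
  -- the unipotent part U of B
  set U : Matrix (Fin n) (Fin n) F := b0⁻¹ • B with hUdef
  have hBU : B = b0 • U := by
    rw [hUdef, smul_smul, mul_inv_cancel₀ hb0, one_smul]
  have hU1 : U = 1 + b0⁻¹ • M := by
    rw [hUdef, hBdecomp, smul_add, smul_smul, inv_mul_cancel₀ hb0, one_smul]
  -- U ^ p = 1
  have hUp : U ^ p = 1 := by
    have hM1n : (b0⁻¹ • M) ^ n = 0 := by rw [smul_pow, hMn, smul_zero]
    have hM1p : (b0⁻¹ • M) ^ p = 0 := by
      have : p = n + (p - n) := by omega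
      rw [this, pow_add, hM1n, zero_mul]
    rw [hU1, add_pow_char_of_commute p (Commute.one_left _), one_pow, hM1p, add_zero]
  -- U ^ k = lam⁻¹ • A
  have hUk : U ^ k = lam⁻¹ • A := by
    have h1 : b0 ^ k • U ^ k = z • A := by
      rw [← smul_pow, ← hBU, heq]
    have h2 := congrArg (fun X => (b0 ^ k)⁻¹ • X) h1
    simp only [smul_smul, inv_mul_cancel₀ (pow_ne_zero k hb0), one_smul] at h2
    rw [h2, hb0k]
    congr 1
    rw [mul_inv, mul_comm z⁻¹ lam⁻¹, mul_assoc, inv_mul_cancel₀ hz, mul_one]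
  -- p does not divide k
  have hpk : ¬ p ∣ k := by
    rintro ⟨t, ht⟩
    have h1 : U ^ k = 1 := by rw [ht, pow_mul, hUp, one_pow]
    rw [hUk] at h1
    have h2 := congrFun (congrFun h1 ⟨0, hn0⟩) ⟨1, by omega⟩
    simp only [Matrix.smul_apply, smul_eq_mul, hA, Matrix.of_apply] at h2
    rw [if_neg (by intro e; exact absurd (congrArg Fin.val e) (by simp)),
      if_pos (by simp)] at h2
    rw [Matrix.one_apply_ne (by intro e; exact absurd (congrArg Fin.val e) (by simp))] at h2
    rw [mul_one] at h2
    exact inv_ne_zero hlam h2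
  -- find s with k * s ≡ 1 (mod p)
  have hks : ∃ s t : ℕ, k * s = p * t + 1 := by
    have hkz : ((k : ℕ) : ZMod p) ≠ 0 := by
      rw [Ne, ZMod.natCast_eq_zero_iff]
      exact hpk
    have hfer : ((k : ℕ) : ZMod p) ^ (p - 1) = 1 := ZMod.pow_card_sub_one_eq_one hkz
    have hmod : k ^ (p - 1) ≡ 1 [MOD p] := by
      rw [← ZMod.natCast_eq_natCast_iff]
      push_cast
      rw [hfer]
    refine ⟨k ^ (p - 2), k ^ (p - 1) / p, ?_⟩
    have hk1 : k * k ^ (p - 2) = k ^ (p - 1) := by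
      rw [← pow_succ']
      congr 1
      omega
    rw [hk1]
    have := Nat.div_add_mod (k ^ (p - 1)) p
    have hm1 : k ^ (p - 1) % p = 1 := by
      have h := hmod
      unfold Nat.ModEq at h
      rwa [Nat.one_mod_eq_one.mpr (by omega)] at h
    omega
  obtain ⟨s, t, hst⟩ := hks
  -- conclude
  have hUfix : U ^ (k * s) = U := by
    rw [hst, pow_succ, pow_mul, hUp, one_pow, one_mul]
  have hUAs : U = (lam⁻¹) ^ s • A ^ s := by
    conv_lhs => rw [← hUfix]
    rw [pow_mul, hUk, smul_pow]
  exact ⟨b0 * (lam⁻¹) ^ s, s, by rw [hBU, hUAs, smul_smul]⟩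
end

section
/- Let q > 2 be a power of 2 with q - 1 prime, and 2 ≤ n < q. Let A in GL_n(F_q) be diagonalizable over F_q with n distinct eigenvalues. If B^k = z·A^t for some z in F_q^* and positive integers k, t with A^t not a scalar multiple of the identity, then B is a scalar multiple of a power of A. -/
open Matrix

/-- In a finite field, if `m` is not divisible by the prime `card F - 1`, the `m`-th power
map on nonzero elements has a power inverse. -/
lemma pow_inverse_exists (F : Type*) [Field F] [Fintype F]
    (hqprime : Nat.Prime (Fintype.card F - 1)) (m : ℕ) (hm : ¬ (Fintype.card F - 1) ∣ m) :
    ∃ m' : ℕ, ∀ x : F, x ≠ 0 → (x ^ m) ^ m' = x := by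
  set p := Fintype.card F - 1 with hp
  haveI : Fact (Nat.Prime p) := ⟨hqprime⟩
  haveI : NeZero p := ⟨hqprime.ne_zero⟩
  have hm0 : ((m : ZMod p)) ≠ 0 := by
    rwa [Ne, ZMod.natCast_eq_zero_iff]
  set m' := ((m : ZMod p)⁻¹).val with hm'
  refine ⟨m', fun x hx => ?_⟩
  have hmm' : ((m * m' : ℕ) : ZMod p) = ((1 : ℕ) : ZMod p) := by
    push_cast
    rw [ZMod.natCast_val, ZMod.cast_id]
    field_simp
  rw [ZMod.natCast_eq_natCast_iff] at hmm'
  have h1le : 1 ≤ m * m' := by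
    rcases Nat.eq_zero_or_pos (m * m') with h | h
    · exfalso
      have h2 := hmm'
      unfold Nat.ModEq at h2
      rw [h, Nat.zero_mod, Nat.mod_eq_of_lt hqprime.one_lt] at h2
      exact one_ne_zero h2.symm
    · exact h
  obtain ⟨c, hc⟩ := (Nat.modEq_iff_dvd' h1le).mp hmm'.symm
  have hmc : m * m' = 1 + p * c := by omega
  have hxp : x ^ p = 1 := FiniteField.pow_card_sub_one_eq_one x hx
  rw [← pow_mul, hmc, pow_add, pow_mul, hxp, one_pow, pow_one, mul_one]

/-- Let `q > 2` be a power of `2` with `q - 1` prime, and `2 ≤ n < q`. Let `A ∈ GL_n(F_q)` be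
diagonalizable over `F_q` with `n` distinct (nonzero) eigenvalues. If `B^k = z • A^t` for
some `z ≠ 0` and `k, t > 0` with `A^t` not a scalar multiple of the identity, then `B` is a
scalar multiple of a power of `A`. -/
theorem stmt_19 (F : Type*) [Field F] [Fintype F] [DecidableEq F]
    (hq2 : 2 < Fintype.card F) (hqpow : ∃ m : ℕ, Fintype.card F = 2 ^ m)
    (hqprime : Nat.Prime (Fintype.card F - 1))
    (n : ℕ) (hn : 2 ≤ n) (hnq : n < Fintype.card F)
    (A : Matrix (Fin n) (Fin n) F)
    (hdiag : ∃ (P : Matrix (Fin n) (Fin n) F) (d : Fin n → F), IsUnit P ∧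
      Function.Injective d ∧ (∀ i, d i ≠ 0) ∧ A = P * Matrix.diagonal d * P⁻¹)
    (B : Matrix (Fin n) (Fin n) F)
    (z : F) (hz : z ≠ 0) (k t : ℕ) (hk : 0 < k) (ht : 0 < t)
    (heq : B ^ k = z • A ^ t)
    (hns : ¬∃ w : F, A ^ t = w • (1 : Matrix (Fin n) (Fin n) F)) :
    ∃ (w : F) (s : ℕ), B = w • A ^ s := by
  obtain ⟨P, d, hP, hdinj, hd0, hA⟩ := hdiag
  obtain ⟨Pu, rfl⟩ := hP
  set q := Fintype.card F with hq
  have hpow1 : ∀ x : F, x ≠ 0 → x ^ (q - 1) = 1 := fun x hx =>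
    FiniteField.pow_card_sub_one_eq_one x hx
  rw [← Matrix.coe_units_inv] at hA
  -- powers of A
  have hApow : ∀ s : ℕ, A ^ s = (Pu : Matrix (Fin n) (Fin n) F) * Matrix.diagonal (fun i => d i ^ s) * (↑Pu⁻¹ : Matrix (Fin n) (Fin n) F) := by
    intro s
    rw [hA, Units.conj_pow, Matrix.diagonal_pow]
    rfl
  -- q - 1 does not divide t
  have hndt : ¬ (q - 1) ∣ t := by
    rintro ⟨c, rfl⟩
    apply hns
    refine ⟨1, ?_⟩
    rw [hApow, one_smul]
    have hd1 : (fun i => d i ^ ((q - 1) * c)) = fun _ : Fin n => (1 : F) := by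
      funext i
      rw [pow_mul, hpow1 _ (hd0 i), one_pow]
    rw [hd1, Matrix.diagonal_one, mul_one, Units.mul_inv]
  -- B commutes with A ^ t
  have hcomm : B * A ^ t = A ^ t * B := by
    have h1 : B * B ^ k = B ^ k * B := ((Commute.refl B).pow_right k).eq
    rw [heq, mul_smul_comm, smul_mul_assoc] at h1
    exact smul_right_injective (Matrix (Fin n) (Fin n) F) hz h1
  set Dt : Fin n → F := fun i => d i ^ t with hDt
  set C : Matrix (Fin n) (Fin n) F :=
    (↑Pu⁻¹ : Matrix (Fin n) (Fin n) F) * B * (Pu : Matrix (Fin n) (Fin n) F) with hC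
  have hBC : B = (Pu : Matrix (Fin n) (Fin n) F) * C * (↑Pu⁻¹ : Matrix (Fin n) (Fin n) F) := by
    rw [hC]
    simp only [mul_assoc, Units.mul_inv_cancel_left, Units.mul_inv, mul_one]
  -- C commutes with diagonal Dt
  have hCd : C * Matrix.diagonal Dt = Matrix.diagonal Dt * C := by
    have h3 : ((Pu : Matrix (Fin n) (Fin n) F) * C * (↑Pu⁻¹ : Matrix (Fin n) (Fin n) F)) *
        ((Pu : Matrix (Fin n) (Fin n) F) * Matrix.diagonal Dt * (↑Pu⁻¹ : Matrix (Fin n) (Fin n) F)) =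
        ((Pu : Matrix (Fin n) (Fin n) F) * Matrix.diagonal Dt * (↑Pu⁻¹ : Matrix (Fin n) (Fin n) F)) *
        ((Pu : Matrix (Fin n) (Fin n) F) * C * (↑Pu⁻¹ : Matrix (Fin n) (Fin n) F)) := by
      rw [← hBC, ← hApow t]
      exact hcomm
    simp only [mul_assoc, Units.inv_mul_cancel_left] at h3
    have h4 := (Units.mul_right_inj Pu).mp h3
    rw [← mul_assoc, ← mul_assoc] at h4
    exact (Units.mul_left_inj Pu⁻¹).mp h4
  -- Dt is injective
  obtain ⟨t', ht'⟩ := pow_inverse_exists F hqprime t hndt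
  have hDtinj : Function.Injective Dt := by
    intro i j hij
    apply hdinj
    have := congrArg (fun x => x ^ t') hij
    simpa only [hDt, ht' _ (hd0 i), ht' _ (hd0 j)] using this
  -- off-diagonal entries of C vanish
  have hCoff : ∀ i j : Fin n, i ≠ j → C i j = 0 := by
    intro i j hij
    have h4 := congrFun (congrFun hCd i) j
    rw [Matrix.mul_diagonal, Matrix.diagonal_mul] at h4
    by_contra hne
    apply hij
    apply hDtinj
    have := h4
    rw [mul_comm (Dt i) (C i j)] at this
    exact (mul_left_cancel₀ hne this).symm
  set e : Fin n → F := fun i => C i i with he'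
  have hCdiag : C = Matrix.diagonal e := by
    ext i j
    by_cases h : i = j
    · subst h; simp [Matrix.diagonal_apply_eq, he']
    · rw [Matrix.diagonal_apply_ne _ h]
      exact hCoff i j h
  -- C ^ k = z • diagonal Dt
  have hCk : C ^ k = z • Matrix.diagonal Dt := by
    have h5 : (Pu : Matrix (Fin n) (Fin n) F) * C ^ k * (↑Pu⁻¹ : Matrix (Fin n) (Fin n) F) =
        (Pu : Matrix (Fin n) (Fin n) F) * (z • Matrix.diagonal Dt) * (↑Pu⁻¹ : Matrix (Fin n) (Fin n) F) := by
      rw [← Units.conj_pow, ← hBC, heq, hApow t, mul_smul_comm, smul_mul_assoc]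
    have h6 := (Units.mul_left_inj Pu⁻¹).mp h5
    exact (Units.mul_right_inj Pu).mp h6
  -- entrywise relation
  have he : ∀ i : Fin n, e i ^ k = z * Dt i := by
    intro i
    rw [hCdiag, Matrix.diagonal_pow] at hCk
    have h6 := congrFun (congrFun hCk i) i
    simpa using h6
  have he0 : ∀ i : Fin n, e i ≠ 0 := by
    intro i h
    have h7 := he i
    rw [h, zero_pow hk.ne'] at h7
    exact (mul_ne_zero hz (pow_ne_zero _ (hd0 i))) h7.symm
  -- q - 1 does not divide k
  have hndk : ¬ (q - 1) ∣ k := by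
    rintro ⟨c, rfl⟩
    have hE : ∀ i : Fin n, z * Dt i = 1 := by
      intro i
      rw [← he i, pow_mul, hpow1 _ (he0 i), one_pow]
    have h01 : Dt (⟨0, by omega⟩ : Fin n) = Dt (⟨1, by omega⟩ : Fin n) :=
      mul_left_cancel₀ hz ((hE _).trans (hE _).symm)
    have := hDtinj h01
    simp [Fin.ext_iff] at this
  obtain ⟨k', hk'⟩ := pow_inverse_exists F hqprime k hndk
  refine ⟨z ^ k', t * k', ?_⟩
  have hee : e = fun i => z ^ k' * d i ^ (t * k') := by
    funext i
    have h8 : e i = (e i ^ k) ^ k' := (hk' (e i) (he0 i)).symm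
    rw [h8, he i]
    simp only [hDt]
    ring
  rw [hBC, hCdiag, hApow (t * k'), hee]
  have hdiagsmul : (Matrix.diagonal fun i => z ^ k' * d i ^ (t * k')) =
      z ^ k' • Matrix.diagonal (fun i => d i ^ (t * k')) := by
    rw [← Matrix.diagonal_smul]
    rfl
  rw [hdiagsmul, mul_smul_comm, smul_mul_assoc]
end
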